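/- arXiv:2506.00171 — 6 statements merged into one kernel-verified Lean document; each statement's English description precedes it below -/
import Mathlib

section
/- Let d ≥ 1, let m > 0 be a real number, and let D := [0, 1/m]^d ⊂ ℝ^d. Let g be twice continuously differentiable on an open neighborhood of D, let u ∈ L¹(D), and let α > 0 and C₀ > 0 be constants such that α·g(x) + Δg(x) + (1/m)·u(x) ≥ C₀/m for Lebesgue-almost every x ∈ D. Then (α/(2m)) ∫_D |g(x)| dx + ∫_D |∇g(x)| dx ≥ (C₀ / 2^{d+2}) · m^{-(d+2)} − (1/(2m²)) ∫_D |u(x)| dx. -/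
open MeasureTheory Real

/-- The Laplacian of `g : ℝ^d → ℝ`, i.e. the sum of the pure second partial derivatives. -/
noncomputable def lap {d : ℕ} (g : EuclideanSpace ℝ (Fin d) → ℝ) (x : EuclideanSpace ℝ (Fin d)) : ℝ :=
  ∑ i, fderiv ℝ (fun y => fderiv ℝ g y (EuclideanSpace.single i 1)) x (EuclideanSpace.single i 1)

namespace Stmt0Aux

open Set

instance coeEuc (d : ℕ) : Coe (Fin d → ℝ) (EuclideanSpace ℝ (Fin d)) := ⟨WithLp.toLp 2⟩

lemma cont_transfer {d : ℕ} {F : EuclideanSpace ℝ (Fin d) → ℝ} {U : Set (EuclideanSpace ℝ (Fin d))}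
    {S : Set (Fin d → ℝ)} (hF : ContinuousOn F U) (hS : S ⊆ WithLp.toLp 2 ⁻¹' U) :
    ContinuousOn (fun x : Fin d → ℝ => F (WithLp.toLp 2 x)) S :=
  hF.comp (by fun_prop : Continuous (WithLp.toLp 2 : (Fin d → ℝ) → EuclideanSpace ℝ (Fin d))).continuousOn hS

lemma sum_mul_prod_le {ι : Type*} [DecidableEq ι] (s : Finset ι) (a : ι → ℝ)
    (h0 : ∀ i, 0 ≤ a i) (h1 : ∀ i, a i ≤ 1) :
    ∑ i ∈ s, a i * ∏ j ∈ s.erase i, (1 - a j) ≤ 1 := by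
  induction s using Finset.induction with
  | empty => simp
  | @insert k s hk ih =>
    rw [Finset.sum_insert hk, Finset.erase_insert hk]
    have hsum : ∑ i ∈ s, a i * ∏ j ∈ (insert k s).erase i, (1 - a j)
        = (1 - a k) * ∑ i ∈ s, a i * ∏ j ∈ s.erase i, (1 - a j) := by
      rw [Finset.mul_sum]
      refine Finset.sum_congr rfl fun i hi => ?_
      have hik : i ≠ k := fun h => hk (h ▸ hi)
      rw [Finset.erase_insert_of_ne hik.symm, Finset.prod_insert (fun h => hk (Finset.mem_of_mem_erase h))]
      ring
    rw [hsum]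
    have hP : ∏ j ∈ s, (1 - a j) ≤ 1 :=
      Finset.prod_le_one (fun j _ => by linarith [h1 j]) (fun j _ => by linarith [h0 j])
    have hP0 : (0:ℝ) ≤ ∏ j ∈ s, (1 - a j) :=
      Finset.prod_nonneg fun j _ => by linarith [h1 j]
    nlinarith [h0 k, h1 k, ih]

noncomputable section

def psi (m t : ℝ) : ℝ := 1 - (2*m*t - 1)^2
def psid (m t : ℝ) : ℝ := -(4*m*(2*m*t - 1))

def phi (d : ℕ) (m : ℝ) (x : Fin d → ℝ) : ℝ := (1/2) * ∏ i, psi m (x i)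

def Phi (d : ℕ) (m : ℝ) (x : Fin d → ℝ) : (Fin d → ℝ) →L[ℝ] ℝ :=
  (1/2 : ℝ) • ∑ i, (∏ j ∈ Finset.univ.erase i, psi m (x j)) •
    (psid m (x i) • (ContinuousLinearMap.proj i : (Fin d → ℝ) →L[ℝ] ℝ))

lemma hasFDerivAt_psi (d : ℕ) (m : ℝ) (i : Fin d) (x : Fin d → ℝ) :
    HasFDerivAt (fun y : Fin d → ℝ => psi m (y i))
      (psid m (x i) • (ContinuousLinearMap.proj i : (Fin d → ℝ) →L[ℝ] ℝ)) x := by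
  have hp : HasFDerivAt (fun y : Fin d → ℝ => y i)
      ((ContinuousLinearMap.proj i : (Fin d → ℝ) →L[ℝ] ℝ)) x :=
    (ContinuousLinearMap.proj (R := ℝ) (φ := fun _ : Fin d => ℝ) i).hasFDerivAt
  have h1 : HasFDerivAt (fun y : Fin d → ℝ => 2*m*(y i) - 1)
      ((2*m) • (ContinuousLinearMap.proj i : (Fin d → ℝ) →L[ℝ] ℝ)) x := (hp.const_mul (2*m)).sub_const 1
  have h2 := (h1.mul h1).const_sub 1
  refine (h2.congr_of_eventuallyEq (Filter.Eventually.of_forall fun y => ?_)).congr_fderiv ?_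
  · simp only [psi, Pi.mul_apply]; ring
  · ext v
    simp [psid, ContinuousLinearMap.smul_apply]
    ring

lemma hasFDerivAt_phi (d : ℕ) (m : ℝ) (x : Fin d → ℝ) :
    HasFDerivAt (phi d m) (Phi d m x) x := by
  have h := HasFDerivAt.finset_prod (u := (Finset.univ : Finset (Fin d)))
    (g := fun i (y : Fin d → ℝ) => psi m (y i))
    (g' := fun i => psid m (x i) • (ContinuousLinearMap.proj i : (Fin d → ℝ) →L[ℝ] ℝ))
    (fun i _ => hasFDerivAt_psi d m i x)
  exact h.const_mul (1/2)

lemma Phi_apply (d : ℕ) (m : ℝ) (x : Fin d → ℝ) (i : Fin d) :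
    Phi d m x (Pi.single i 1)
      = (1/2) * ((∏ j ∈ Finset.univ.erase i, psi m (x j)) * psid m (x i)) := by
  simp only [Phi, ContinuousLinearMap.smul_apply, ContinuousLinearMap.sum_apply,
    ContinuousLinearMap.proj_apply, smul_eq_mul]
  rw [Finset.sum_eq_single i]
  · simp
  · intro j _ hji
    simp [Pi.single_eq_of_ne hji]
  · simp

lemma psi_mem {m t : ℝ} (hm : 0 < m) (ht : t ∈ Icc (0:ℝ) (1/m)) : psi m t ∈ Icc (0:ℝ) 1 := by
  obtain ⟨h0, h1⟩ := ht
  have h2 : 2*m*t ≤ 2 := by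
    calc 2*m*t ≤ 2*m*(1/m) := by nlinarith
    _ = 2 := by field_simp
  have ha : 0 ≤ 2*m*t := mul_nonneg (by linarith) h0
  have hb : 0 ≤ 2 - 2*m*t := by linarith
  constructor
  · simp only [psi]; nlinarith [mul_nonneg ha hb]
  · simp only [psi]; nlinarith [sq_nonneg (2*m*t - 1)]

lemma phi_mem {d : ℕ} {m : ℝ} (hm : 0 < m) {x : Fin d → ℝ}
    (hx : ∀ i, x i ∈ Icc (0:ℝ) (1/m)) : phi d m x ∈ Icc (0:ℝ) 1 := by
  have h0 : (0:ℝ) ≤ ∏ i, psi m (x i) := Finset.prod_nonneg fun i _ => (psi_mem hm (hx i)).1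
  have h1 : ∏ i, psi m (x i) ≤ 1 :=
    Finset.prod_le_one (fun i _ => (psi_mem hm (hx i)).1) (fun i _ => (psi_mem hm (hx i)).2)
  constructor
  · simp only [phi]; linarith
  · simp only [phi]; linarith

lemma psi_zero (m : ℝ) : psi m 0 = 0 := by simp [psi]

lemma psi_top {m : ℝ} (hm : m ≠ 0) : psi m (1/m) = 0 := by
  simp only [psi]
  field_simp
  norm_num

lemma integral_psi {m : ℝ} (hm : 0 < m) : ∫ t in Icc (0:ℝ) (1/m), psi m t = 2/(3*m) := by
  rw [integral_Icc_eq_integral_Ioc, ← intervalIntegral.integral_of_le (by positivity : (0:ℝ) ≤ 1/m)]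
  have h : ∫ t in (0:ℝ)..(1/m), psi m t
      = ∫ t in (0:ℝ)..(1/m), (4*m*t - 4*m^2*t^2) := by
    apply intervalIntegral.integral_congr
    intro t _
    simp only [psi]; ring
  have i1 : IntervalIntegrable (fun t : ℝ => 4*m*t) volume 0 (1/m) :=
    (by continuity : Continuous fun t : ℝ => 4*m*t).intervalIntegrable _ _
  have i2 : IntervalIntegrable (fun t : ℝ => 4*m^2*t^2) volume 0 (1/m) :=
    (by continuity : Continuous fun t : ℝ => 4*m^2*t^2).intervalIntegrable _ _
  have e1 : ∫ t in (0:ℝ)..(1/m), t = (1/m)^2/2 := by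
    simp
  have e2 : ∫ t in (0:ℝ)..(1/m), t^2 = (1/m)^3/3 := by
    simp; ring
  rw [h, intervalIntegral.integral_sub i1 i2, intervalIntegral.integral_const_mul,
    intervalIntegral.integral_const_mul, e1, e2]
  field_simp
  ring

lemma integral_phi (d : ℕ) {m : ℝ} (hm : 0 < m) :
    ∫ x in Icc (fun _ : Fin d => (0:ℝ)) (fun _ => 1/m), phi d m x
      = (1/2) * (2/(3*m))^d := by
  set a : Fin d → ℝ := fun _ => (0:ℝ)
  set b : Fin d → ℝ := fun _ => 1/m
  have hmem : ∀ x : Fin d → ℝ, x ∈ Icc a b ↔ ∀ i, x i ∈ Icc (0:ℝ) (1/m) := by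
    intro x
    simp only [Set.mem_Icc, Pi.le_def, a, b]
    constructor
    · rintro ⟨h1, h2⟩ i; exact ⟨h1 i, h2 i⟩
    · intro h; exact ⟨fun i => (h i).1, fun i => (h i).2⟩
  have hind : ∀ x : Fin d → ℝ, ∏ i, (Icc (0:ℝ) (1/m)).indicator (psi m) (x i)
      = (Icc a b).indicator (fun x => ∏ i, psi m (x i)) x := by
    intro x
    by_cases hx : x ∈ Icc a b
    · rw [indicator_of_mem hx]
      exact Finset.prod_congr rfl fun i _ => indicator_of_mem ((hmem x).1 hx i) _
    · rw [indicator_of_notMem hx]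
      obtain ⟨i, hi⟩ : ∃ i, x i ∉ Icc (0:ℝ) (1/m) := by
        by_contra h; push_neg at h; exact hx ((hmem x).2 h)
      exact Finset.prod_eq_zero (Finset.mem_univ i) (indicator_of_notMem hi _)
  have h2 : ∫ x in Icc a b, ∏ i, psi m (x i) = (2/(3*m))^d := by
    rw [← integral_indicator measurableSet_Icc]
    simp_rw [← hind]
    rw [integral_fintype_prod_volume_eq_pow (ι := Fin d) ((Icc (0:ℝ) (1/m)).indicator (psi m)),
      integral_indicator measurableSet_Icc, integral_psi hm]
    simp
  simp only [phi]
  rw [MeasureTheory.integral_const_mul, h2]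

lemma grad_coord (d : ℕ) (g : EuclideanSpace ℝ (Fin d) → ℝ) (x : EuclideanSpace ℝ (Fin d))
    (i : Fin d) : fderiv ℝ g x (EuclideanSpace.single i 1) = gradient g x i := by
  have h : gradient g x = (InnerProductSpace.toDual ℝ _).symm (fderiv ℝ g x) := rfl
  have h2 : (inner ℝ (gradient g x) (EuclideanSpace.single i (1:ℝ)) : ℝ)
      = fderiv ℝ g x (EuclideanSpace.single i 1) := by
    rw [h]; exact InnerProductSpace.toDual_symm_apply
  rw [← h2, EuclideanSpace.inner_single_right]
  simp

lemma norm_grad_sq (d : ℕ) (g : EuclideanSpace ℝ (Fin d) → ℝ) (x : EuclideanSpace ℝ (Fin d)) :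
    ∑ i, (fderiv ℝ g x (EuclideanSpace.single i 1))^2 = ‖gradient g x‖^2 := by
  rw [EuclideanSpace.norm_eq, Real.sq_sqrt (by positivity)]
  refine Finset.sum_congr rfl fun i _ => ?_
  rw [grad_coord]
  simp [sq_abs]

lemma cs_bound (d : ℕ) (m : ℝ) (hm : 0 < m) (g : EuclideanSpace ℝ (Fin d) → ℝ)
    (x : EuclideanSpace ℝ (Fin d)) (c : Fin d → ℝ) (hc : ∑ i, (c i)^2 ≤ 4*m^2) :
    |∑ i, fderiv ℝ g x (EuclideanSpace.single i 1) * c i| ≤ 2*m*‖gradient g x‖ := by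
  have hcs := Finset.sum_mul_sq_le_sq_mul_sq Finset.univ
    (fun i => fderiv ℝ g x (EuclideanSpace.single i 1)) c
  rw [norm_grad_sq] at hcs
  have h2 : (∑ i, fderiv ℝ g x (EuclideanSpace.single i 1) * c i)^2
      ≤ (2*m*‖gradient g x‖)^2 := by
    calc (∑ i, fderiv ℝ g x (EuclideanSpace.single i 1) * c i)^2
        ≤ ‖gradient g x‖^2 * ∑ i, (c i)^2 := hcs
      _ ≤ ‖gradient g x‖^2 * (4*m^2) := mul_le_mul_of_nonneg_left hc (by positivity)
      _ = (2*m*‖gradient g x‖)^2 := by ring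
  calc |∑ i, fderiv ℝ g x (EuclideanSpace.single i 1) * c i|
      = Real.sqrt ((∑ i, fderiv ℝ g x (EuclideanSpace.single i 1) * c i)^2) := by
        rw [Real.sqrt_sq_eq_abs]
    _ ≤ Real.sqrt ((2*m*‖gradient g x‖)^2) := Real.sqrt_le_sqrt h2
    _ = |2*m*‖gradient g x‖| := Real.sqrt_sq_eq_abs _
    _ = 2*m*‖gradient g x‖ := abs_of_nonneg (by positivity)

lemma sum_sq_Phi_le (d : ℕ) {m : ℝ} (hm : 0 < m) (x : Fin d → ℝ)
    (hx : ∀ i, x i ∈ Icc (0:ℝ) (1/m)) :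
    ∑ i, (Phi d m x (Pi.single i 1))^2 ≤ 4*m^2 := by
  set a : Fin d → ℝ := fun j => (2*m*(x j) - 1)^2 with haa
  have ha0 : ∀ j, 0 ≤ a j := fun j => sq_nonneg _
  have ha1 : ∀ j, a j ≤ 1 := by
    intro j
    have h0 := (hx j).1
    have h1 := (hx j).2
    have h2 : 2*m*(x j) ≤ 2 := by
      calc 2*m*(x j) ≤ 2*m*(1/m) := by nlinarith
      _ = 2 := by field_simp
    have h3 : 0 ≤ 2*m*(x j) := mul_nonneg (by linarith) h0
    simp only [haa]
    nlinarith
  have hpsi : ∀ j, psi m (x j) = 1 - a j := fun j => rfl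
  have key : ∀ i, (Phi d m x (Pi.single i 1))^2
      ≤ 4*m^2 * (a i * ∏ j ∈ Finset.univ.erase i, (1 - a j)) := by
    intro i
    rw [Phi_apply]
    have hP2 : (∏ j ∈ Finset.univ.erase i, psi m (x j))^2
        ≤ ∏ j ∈ Finset.univ.erase i, (1 - a j) := by
      rw [← Finset.prod_pow]
      apply Finset.prod_le_prod (fun j _ => sq_nonneg _)
      intro j _
      rw [hpsi]
      nlinarith [ha0 j, ha1 j]
    have hpsid : (psid m (x i))^2 = 16*m^2 * a i := by
      simp only [psid, haa]; ring
    calc (1/2 * ((∏ j ∈ Finset.univ.erase i, psi m (x j)) * psid m (x i)))^2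
        = (1/4) * (psid m (x i))^2 * (∏ j ∈ Finset.univ.erase i, psi m (x j))^2 := by ring
      _ = 4*m^2 * a i * (∏ j ∈ Finset.univ.erase i, psi m (x j))^2 := by rw [hpsid]; ring
      _ ≤ 4*m^2 * a i * ∏ j ∈ Finset.univ.erase i, (1 - a j) := by
          apply mul_le_mul_of_nonneg_left hP2
          positivity
      _ = 4*m^2 * (a i * ∏ j ∈ Finset.univ.erase i, (1 - a j)) := by ring
  calc ∑ i, (Phi d m x (Pi.single i 1))^2
      ≤ ∑ i, 4*m^2 * (a i * ∏ j ∈ Finset.univ.erase i, (1 - a j)) :=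
        Finset.sum_le_sum fun i _ => key i
    _ = 4*m^2 * ∑ i, (a i * ∏ j ∈ Finset.univ.erase i, (1 - a j)) := by rw [Finset.mul_sum]
    _ ≤ 4*m^2 * 1 :=
        mul_le_mul_of_nonneg_left (sum_mul_prod_le Finset.univ a ha0 ha1) (by positivity)
    _ = 4*m^2 := by ring

def eqvCLM (d : ℕ) : (Fin d → ℝ) →L[ℝ] EuclideanSpace ℝ (Fin d) :=
  (EuclideanSpace.equiv (Fin d) ℝ).symm.toContinuousLinearMap

lemma hasFDerivAt_transfer (d : ℕ) (f : EuclideanSpace ℝ (Fin d) → ℝ)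
    (f' : EuclideanSpace ℝ (Fin d) →L[ℝ] ℝ) (x : Fin d → ℝ)
    (h : HasFDerivAt f f' x) :
    HasFDerivAt (fun y : Fin d → ℝ => f y) (f'.comp (eqvCLM d)) x :=
  h.comp x ((EuclideanSpace.equiv (Fin d) ℝ).symm.hasFDerivAt (x := x))

lemma phi_continuous (d : ℕ) (m : ℝ) : Continuous (phi d m) := by
  apply continuous_const.mul
  apply continuous_finset_prod
  intro i _
  have : Continuous fun x : Fin d → ℝ => x i := continuous_apply i
  unfold psi
  continuity

lemma Phi_continuous (d : ℕ) (m : ℝ) (i : Fin d) :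
    Continuous (fun x : Fin d → ℝ => Phi d m x (Pi.single i 1)) := by
  have h : ∀ x : Fin d → ℝ, Phi d m x (Pi.single i 1)
      = (1/2) * ((∏ j ∈ Finset.univ.erase i, psi m (x j)) * psid m (x i)) :=
    fun x => Phi_apply d m x i
  simp_rw [h]
  apply continuous_const.mul
  apply Continuous.mul
  · apply continuous_finset_prod
    intro j _
    have : Continuous fun x : Fin d → ℝ => x j := continuous_apply j
    unfold psi; continuity
  · have : Continuous fun x : Fin d → ℝ => x i := continuous_apply i
    unfold psid; continuity

lemma divergence_eq_zero (n : ℕ) (m : ℝ) (g : EuclideanSpace ℝ (Fin (n+1)) → ℝ)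
    (U : Set (EuclideanSpace ℝ (Fin (n+1))))
    (hm : 0 < m) (hU : IsOpen U)
    (hDU : Icc (fun _ : Fin (n+1) => (0:ℝ)) (fun _ => 1/m) ⊆ WithLp.toLp 2 ⁻¹' U)
    (hg : ContDiffOn ℝ 2 g U) :
    ∫ x in Icc (fun _ : Fin (n+1) => (0:ℝ)) (fun _ => 1/m),
      (phi (n+1) m x * lap g x
        + ∑ i, fderiv ℝ g x (EuclideanSpace.single i 1) * Phi (n+1) m x (Pi.single i 1)) = 0 := by
  set a : Fin (n+1) → ℝ := fun _ => (0:ℝ) with ha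
  set b : Fin (n+1) → ℝ := fun _ => 1/m with hb
  have hab : a ≤ b := fun i => by simp [ha, hb]; positivity
  set G : Fin (n+1) → EuclideanSpace ℝ (Fin (n+1)) → ℝ :=
    fun i y => fderiv ℝ g y (EuclideanSpace.single i 1) with hG
  set B : Fin (n+1) → (Fin (n+1) → ℝ) → ((Fin (n+1) → ℝ) →L[ℝ] ℝ) :=
    fun i x => (fderiv ℝ (G i) x).comp (eqvCLM (n+1)) with hB
  set f : Fin (n+1) → (Fin (n+1) → ℝ) → ℝ := fun i x => phi (n+1) m x * G i x with hf
  set f' : Fin (n+1) → (Fin (n+1) → ℝ) → ((Fin (n+1) → ℝ) →L[ℝ] ℝ) :=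
    fun i x => phi (n+1) m x • B i x + G i x • Phi (n+1) m x with hf'
  have hg1 : ContDiffOn ℝ 1 (fun y => fderiv ℝ g y) U :=
    hg.fderiv_of_isOpen hU (by norm_num)
  have hGc : ∀ i, ContDiffOn ℝ 1 (G i) U := fun i => hg1.clm_apply contDiffOn_const
  have hGcont : ∀ i, ContinuousOn (G i) U := fun i => (hGc i).continuousOn
  have hBcont : ∀ i, ContinuousOn (fun x => fderiv ℝ (G i) x) U := fun i =>
    (hGc i).continuousOn_fderiv_of_isOpen hU le_rfl
  have hGdiff : ∀ i, ∀ x ∈ U, DifferentiableAt ℝ (G i) x := fun i x hx =>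
    ((hGc i).contDiffAt (hU.mem_nhds hx)).differentiableAt one_ne_zero
  have hBapp : ∀ i x, B i x (Pi.single i 1) = fderiv ℝ (G i) x (EuclideanSpace.single i 1) :=
    fun i x => rfl
  have hdiv : ∀ x : Fin (n+1) → ℝ, ∑ i, f' i x (Pi.single i (1:ℝ))
      = phi (n+1) m x * lap g x + ∑ i, G i x * Phi (n+1) m x (Pi.single i 1) := by
    intro x
    have : ∀ i, f' i x (Pi.single i (1:ℝ))
        = phi (n+1) m x * fderiv ℝ (G i) x (EuclideanSpace.single i 1)
          + G i x * Phi (n+1) m x (Pi.single i 1) := by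
      intro i
      simp only [hf', ContinuousLinearMap.add_apply, ContinuousLinearMap.coe_smul',
        Pi.smul_apply, smul_eq_mul, hBapp]
    rw [Finset.sum_congr rfl (fun i _ => this i), Finset.sum_add_distrib, ← Finset.mul_sum]
    rfl
  have hsub : Icc a b ⊆ WithLp.toLp 2 ⁻¹' U := hDU
  have hphicont : Continuous (phi (n+1) m) := phi_continuous (n+1) m
  have hlapcont : ContinuousOn (fun x : EuclideanSpace ℝ (Fin (n+1)) => lap g x) U := by
    unfold lap
    apply continuousOn_finset_sum
    intro i _
    exact (hBcont i).clm_apply continuousOn_const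
  have hdivcont : ContinuousOn
      (fun x : Fin (n+1) → ℝ => phi (n+1) m x * lap g x
        + ∑ i, G i x * Phi (n+1) m x (Pi.single i 1)) (Icc a b) := by
    apply ContinuousOn.add
    · exact (hphicont.continuousOn).mul
        (cont_transfer hlapcont hsub)
    · apply continuousOn_finset_sum
      intro i _
      exact (cont_transfer (hGcont i) hsub).mul
        (Phi_continuous (n+1) m i).continuousOn
  have Hi : IntegrableOn (fun x : Fin (n+1) → ℝ => ∑ i, f' i x (Pi.single i 1)) (Icc a b) := by
    have := hdivcont.integrableOn_compact (μ := volume) isCompact_Icc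
    exact this.congr_fun (fun x _ => (hdiv x).symm) measurableSet_Icc
  have Hd : ∀ x ∈ (Set.pi univ fun i => Ioo (a i) (b i)) \ (∅ : Set (Fin (n+1) → ℝ)),
      ∀ i, HasFDerivAt (f i) (f' i x) x := by
    rintro x ⟨hx, -⟩ i
    have hxU : (x : EuclideanSpace ℝ (Fin (n+1))) ∈ U := by
      apply hsub
      exact ⟨fun j => (hx j (mem_univ j)).1.le, fun j => (hx j (mem_univ j)).2.le⟩
    have hphi := hasFDerivAt_phi (n+1) m x
    have hGpi : HasFDerivAt (fun y : Fin (n+1) → ℝ => G i y) (B i x) x :=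
      hasFDerivAt_transfer (n+1) (G i) _ x ((hGdiff i x hxU).hasFDerivAt)
    exact hphi.mul hGpi
  have Hc : ∀ i, ContinuousOn (f i) (Icc a b) := fun i =>
    (hphicont.continuousOn).mul
      (cont_transfer (hGcont i) hsub)
  have hdt := integral_divergence_of_hasFDerivAt_off_countable' a b hab f f'
    ∅ countable_empty Hc Hd Hi
  have hfront : ∀ i : Fin (n+1), ∀ y : Fin n → ℝ, f i (Fin.insertNth i (b i) y) = 0 := by
    intro i y
    have : phi (n+1) m (Fin.insertNth i (b i) y) = 0 := by
      unfold phi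
      rw [Finset.prod_eq_zero (Finset.mem_univ i)]
      · ring
      · rw [Fin.insertNth_apply_same]
        exact psi_top hm.ne'
    simp [hf, this]
  have hback : ∀ i : Fin (n+1), ∀ y : Fin n → ℝ, f i (Fin.insertNth i (a i) y) = 0 := by
    intro i y
    have : phi (n+1) m (Fin.insertNth i (a i) y) = 0 := by
      unfold phi
      rw [Finset.prod_eq_zero (Finset.mem_univ i)]
      · ring
      · rw [Fin.insertNth_apply_same]
        exact psi_zero m
    simp [hf, this]
  calc ∫ x in Icc a b,
        (phi (n+1) m x * lap g x + ∑ i, G i x * Phi (n+1) m x (Pi.single i 1))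
      = ∫ x in Icc a b, ∑ i, f' i x (Pi.single i 1) :=
        integral_congr_ae (Filter.Eventually.of_forall fun x => (hdiv x).symm)
    _ = ∑ i : Fin (n+1), ((∫ x in Icc (a ∘ i.succAbove) (b ∘ i.succAbove),
            f i (Fin.insertNth i (b i) x))
          - ∫ x in Icc (a ∘ i.succAbove) (b ∘ i.succAbove), f i (Fin.insertNth i (a i) x)) := hdt
    _ = 0 := by
        refine Finset.sum_eq_zero fun i _ => ?_
        simp_rw [hfront i, hback i]
        simp

end
end Stmt0Aux


open Stmt0Aux in
/-- If `α g + Δ g + (1/m) u ≥ C₀/m` a.e. on the cube `D = [0, 1/m]^d`,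
with `g` twice continuously differentiable on an open neighborhood of `D` and `u ∈ L¹(D)`, then
`(α/(2m)) ∫_D |g| + ∫_D |∇g| ≥ (C₀/2^{d+2}) m^{-(d+2)} - (1/(2m²)) ∫_D |u|`. -/
theorem stmt0 (d : ℕ) (hd : 1 ≤ d) (m : ℝ) (hm : 0 < m)
    (D : Set (EuclideanSpace ℝ (Fin d)))
    (hD : D = {x : EuclideanSpace ℝ (Fin d) | ∀ i, x i ∈ Set.Icc (0 : ℝ) (1 / m)})
    (g u : EuclideanSpace ℝ (Fin d) → ℝ)
    (U : Set (EuclideanSpace ℝ (Fin d))) (hU : IsOpen U) (hDU : D ⊆ U)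
    (hg : ContDiffOn ℝ 2 g U)
    (hu : IntegrableOn u D)
    (α C₀ : ℝ) (hα : 0 < α) (hC₀ : 0 < C₀)
    (hineq : ∀ᵐ x ∂(volume.restrict D), C₀ / m ≤ α * g x + lap g x + (1 / m) * u x) :
    C₀ / 2 ^ (d + 2) * (1 / m) ^ (d + 2) - (1 / (2 * m ^ 2)) * ∫ x in D, |u x|
      ≤ (α / (2 * m)) * (∫ x in D, |g x|) + ∫ x in D, ‖gradient g x‖ := by
  obtain ⟨n, rfl⟩ : ∃ n, d = n + 1 := ⟨d - 1, (Nat.succ_pred_eq_of_pos hd).symm⟩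
  classical
  set a : Fin (n+1) → ℝ := fun _ => (0:ℝ) with ha
  set b : Fin (n+1) → ℝ := fun _ => 1/m with hb
  have hDset : (WithLp.toLp 2 : (Fin (n+1) → ℝ) → EuclideanSpace ℝ (Fin (n+1))) ⁻¹' D
      = Set.Icc a b := by
    rw [hD]; ext x
    constructor
    · intro h; exact ⟨fun i => (h i).1, fun i => (h i).2⟩
    · rintro ⟨h1, h2⟩ i; exact ⟨h1 i, h2 i⟩
  have hmp := PiLp.volume_preserving_toLp (Fin (n+1))
  have hme : MeasurableEmbedding (WithLp.toLp 2 : (Fin (n+1) → ℝ) → EuclideanSpace ℝ (Fin (n+1))) :=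
    (MeasurableEquiv.toLp 2 (Fin (n+1) → ℝ)).measurableEmbedding
  have tI : ∀ F : EuclideanSpace ℝ (Fin (n+1)) → ℝ,
      ∫ x in D, F x = ∫ x in Set.Icc a b, F (WithLp.toLp 2 x) := fun F => by
    rw [← hDset]; exact (hmp.setIntegral_preimage_emb hme F D).symm
  rw [tI (fun x => |u x|), tI (fun x => |g x|), tI (fun x => ‖gradient g x‖)]
  replace hineq : ∀ᵐ (x : Fin (n+1) → ℝ) ∂(volume.restrict (Set.Icc a b)),
      C₀ / m ≤ α * g x + lap g x + (1 / m) * u x := by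
    rw [← hDset]; exact (hmp.restrict_preimage_emb hme D).quasiMeasurePreserving.ae hineq
  replace hu : IntegrableOn (fun x : Fin (n+1) → ℝ => u x) (Set.Icc a b) := by
    rw [← hDset]; exact (hmp.integrableOn_comp_preimage hme).2 hu
  replace hDU : Set.Icc a b ⊆ WithLp.toLp 2 ⁻¹' U := by
    rw [← hDset]; exact Set.preimage_mono hDU
  have hmemIcc : ∀ x : Fin (n+1) → ℝ, x ∈ Set.Icc a b → ∀ i, x i ∈ Set.Icc (0:ℝ) (1/m) :=
    fun x hx i => ⟨hx.1 i, hx.2 i⟩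
  -- regularity
  have hg1 : ContDiffOn ℝ 1 (fun y => fderiv ℝ g y) U :=
    hg.fderiv_of_isOpen hU (by norm_num)
  have hGcont : ∀ i, ContinuousOn
      (fun y : EuclideanSpace ℝ (Fin (n+1)) => fderiv ℝ g y (EuclideanSpace.single i 1)) U :=
    fun i => (hg1.clm_apply contDiffOn_const).continuousOn
  have hBcont : ∀ i : Fin (n+1), ContinuousOn
      (fun x => fderiv ℝ (fun y : EuclideanSpace ℝ (Fin (n+1)) =>
        fderiv ℝ g y (EuclideanSpace.single i 1)) x) U :=
    fun i => (hg1.clm_apply contDiffOn_const).continuousOn_fderiv_of_isOpen hU le_rfl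
  have hlapcont : ContinuousOn (fun x : EuclideanSpace ℝ (Fin (n+1)) => lap g x) U := by
    unfold lap
    apply continuousOn_finset_sum
    intro i _
    exact (hBcont i).clm_apply continuousOn_const
  have hgradcont : ContinuousOn (fun x : EuclideanSpace ℝ (Fin (n+1)) => ‖gradient g x‖) U := by
    have h2 : ContinuousOn (fun y : EuclideanSpace ℝ (Fin (n+1)) => gradient g y) U :=
      (InnerProductSpace.toDual ℝ (EuclideanSpace ℝ (Fin (n+1)))).symm.continuous.comp_continuousOn
        hg1.continuousOn
    exact h2.norm
  have hsubU : Set.Icc a b ⊆ WithLp.toLp 2 ⁻¹' U := hDU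
  -- integrability
  have hconti : ∀ F : (Fin (n+1) → ℝ) → ℝ, ContinuousOn F (Set.Icc a b) →
      IntegrableOn F (Set.Icc a b) := fun F hF =>
    hF.integrableOn_compact (μ := volume) isCompact_Icc
  have hphic : Continuous (phi (n+1) m) := phi_continuous (n+1) m
  have igc : ContinuousOn (fun x : Fin (n+1) → ℝ => g x) (Set.Icc a b) :=
    cont_transfer hg.continuousOn hsubU
  have iphig : IntegrableOn (fun x : Fin (n+1) → ℝ => phi (n+1) m x * g x) (Set.Icc a b) :=
    hconti _ (hphic.continuousOn.mul igc)
  have iabsg : IntegrableOn (fun x : Fin (n+1) → ℝ => |g x|) (Set.Icc a b) :=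
    hconti _ igc.abs
  have iphilap : IntegrableOn (fun x : Fin (n+1) → ℝ => phi (n+1) m x * lap g x) (Set.Icc a b) :=
    hconti _ (hphic.continuousOn.mul
      (cont_transfer hlapcont hsubU))
  have iR : IntegrableOn (fun x : Fin (n+1) → ℝ =>
      ∑ i, fderiv ℝ g x (EuclideanSpace.single i 1) * Phi (n+1) m x (Pi.single i 1))
      (Set.Icc a b) := by
    apply hconti
    apply continuousOn_finset_sum
    intro i _
    exact (cont_transfer (hGcont i) hsubU).mul
      (Phi_continuous (n+1) m i).continuousOn
  have igrad : IntegrableOn (fun x : Fin (n+1) → ℝ => ‖gradient g x‖) (Set.Icc a b) :=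
    hconti _ (cont_transfer hgradcont hsubU)
  have iphiC : IntegrableOn (fun x : Fin (n+1) → ℝ => phi (n+1) m x * (C₀/m)) (Set.Icc a b) :=
    hconti _ (hphic.continuousOn.mul continuousOn_const)
  have iphi : IntegrableOn (fun x : Fin (n+1) → ℝ => phi (n+1) m x) (Set.Icc a b) :=
    hconti _ hphic.continuousOn
  have hphibd : ∀ᵐ x ∂(volume.restrict (Set.Icc a b)), ‖phi (n+1) m x‖ ≤ 1 := by
    filter_upwards [ae_restrict_mem (measurableSet_Icc :
      MeasurableSet (Set.Icc a b))] with x hx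
    have h1 := phi_mem hm (hmemIcc x hx)
    rw [Real.norm_eq_abs, abs_of_nonneg h1.1]
    exact h1.2
  have iphiu : IntegrableOn (fun x : Fin (n+1) → ℝ => phi (n+1) m x * u x) (Set.Icc a b) :=
    Integrable.bdd_mul hu hphic.aestronglyMeasurable.restrict hphibd
  have iabsu : IntegrableOn (fun x : Fin (n+1) → ℝ => |u x|) (Set.Icc a b) := hu.abs
  -- step A
  have hphiineq : ∀ᵐ x ∂(volume.restrict (Set.Icc a b)),
      phi (n+1) m x * (C₀/m) ≤ phi (n+1) m x * (α * g x + lap g x + (1/m) * u x) := by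
    filter_upwards [hineq, ae_restrict_mem (measurableSet_Icc :
      MeasurableSet (Set.Icc a b))] with x h1 h2
    exact mul_le_mul_of_nonneg_left h1 (phi_mem hm (hmemIcc x h2)).1
  have hre : (fun x : Fin (n+1) → ℝ => phi (n+1) m x * (α * g x + lap g x + (1/m) * u x))
      = fun x : Fin (n+1) → ℝ => α * (phi (n+1) m x * g x) + phi (n+1) m x * lap g x
          + (1/m) * (phi (n+1) m x * u x) := by
    funext x; ring
  have hRHSint : IntegrableOn
      (fun x : Fin (n+1) → ℝ => phi (n+1) m x * (α * g x + lap g x + (1/m) * u x))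
      (Set.Icc a b) := by
    rw [hre]
    exact ((iphig.const_mul α).add iphilap).add (iphiu.const_mul (1/m))
  have hA : ∫ x in Set.Icc a b, phi (n+1) m x * (C₀/m)
      ≤ ∫ x in Set.Icc a b, phi (n+1) m x * (α * g x + lap g x + (1/m) * u x) :=
    integral_mono_ae iphiC hRHSint hphiineq
  have hsplit : ∫ x in Set.Icc a b, phi (n+1) m x * (α * g x + lap g x + (1/m) * u x)
      = α * (∫ x in Set.Icc a b, phi (n+1) m x * g x)
        + (∫ x in Set.Icc a b, phi (n+1) m x * lap g x)
        + (1/m) * ∫ x in Set.Icc a b, phi (n+1) m x * u x := by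
    have i12 : IntegrableOn (fun x : Fin (n+1) → ℝ =>
        α * (phi (n+1) m x * g x) + phi (n+1) m x * lap g x) (Set.Icc a b) :=
      (iphig.const_mul α).add iphilap
    rw [hre, integral_add i12 (iphiu.const_mul (1/m)),
      integral_add (iphig.const_mul α) iphilap, integral_const_mul, integral_const_mul]
  have hLHSval : ∫ x in Set.Icc a b, phi (n+1) m x * (C₀/m)
      = (C₀/m) * ((1/2) * (2/(3*m))^(n+1)) := by
    rw [MeasureTheory.integral_mul_const, integral_phi (n+1) hm]
    ring
  -- step B
  have hdz := divergence_eq_zero n m g U hm hU hsubU hg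
  have h0 : (∫ x in Set.Icc a b, phi (n+1) m x * lap g x)
      + (∫ x in Set.Icc a b,
          ∑ i, fderiv ℝ g x (EuclideanSpace.single i 1) * Phi (n+1) m x (Pi.single i 1)) = 0 := by
    rw [← integral_add iphilap iR]
    exact hdz
  have hRbound : ∫ x in Set.Icc a b,
        |∑ i, fderiv ℝ g x (EuclideanSpace.single i 1) * Phi (n+1) m x (Pi.single i 1)|
      ≤ ∫ x in Set.Icc a b, 2*m*‖gradient g x‖ := by
    apply setIntegral_mono_on iR.abs (igrad.const_mul (2*m)) measurableSet_Icc
    intro x hx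
    exact cs_bound (n+1) m hm g x _ (sum_sq_Phi_le (n+1) hm x (hmemIcc x hx))
  have b2 : (∫ x in Set.Icc a b, phi (n+1) m x * lap g x)
      ≤ 2*m*∫ x in Set.Icc a b, ‖gradient g x‖ := by
    have e1 : (∫ x in Set.Icc a b, phi (n+1) m x * lap g x)
        = -(∫ x in Set.Icc a b,
            ∑ i, fderiv ℝ g x (EuclideanSpace.single i 1) * Phi (n+1) m x (Pi.single i 1)) := by
      linarith
    rw [e1]
    calc -(∫ x in Set.Icc a b,
            ∑ i, fderiv ℝ g x (EuclideanSpace.single i 1) * Phi (n+1) m x (Pi.single i 1))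
        ≤ |∫ x in Set.Icc a b,
            ∑ i, fderiv ℝ g x (EuclideanSpace.single i 1) * Phi (n+1) m x (Pi.single i 1)| :=
          neg_le_abs _
      _ ≤ ∫ x in Set.Icc a b,
            |∑ i, fderiv ℝ g x (EuclideanSpace.single i 1) * Phi (n+1) m x (Pi.single i 1)| :=
          by simpa [Real.norm_eq_abs] using
            norm_integral_le_integral_norm (μ := volume.restrict (Set.Icc a b))
              (fun x : Fin (n+1) → ℝ =>
                ∑ i, fderiv ℝ g x (EuclideanSpace.single i 1) * Phi (n+1) m x (Pi.single i 1))
      _ ≤ ∫ x in Set.Icc a b, 2*m*‖gradient g x‖ := hRbound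
      _ = 2*m*∫ x in Set.Icc a b, ‖gradient g x‖ := integral_const_mul _ _
  -- pointwise bounds
  have hphig_le : (∫ x in Set.Icc a b, phi (n+1) m x * g x)
      ≤ ∫ x in Set.Icc a b, |g x| := by
    apply setIntegral_mono_on iphig iabsg measurableSet_Icc
    intro x hx
    have h1 := phi_mem hm (hmemIcc x hx)
    calc phi (n+1) m x * g x ≤ |phi (n+1) m x * g x| := le_abs_self _
      _ = |phi (n+1) m x| * |g x| := abs_mul _ _
      _ ≤ 1 * |g x| := mul_le_mul_of_nonneg_right
          (by rw [abs_of_nonneg h1.1]; exact h1.2) (abs_nonneg _)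
      _ = |g x| := one_mul _
  have hphiu_le : (∫ x in Set.Icc a b, phi (n+1) m x * u x)
      ≤ ∫ x in Set.Icc a b, |u x| := by
    apply setIntegral_mono_on iphiu iabsu measurableSet_Icc
    intro x hx
    have h1 := phi_mem hm (hmemIcc x hx)
    calc phi (n+1) m x * u x ≤ |phi (n+1) m x * u x| := le_abs_self _
      _ = |phi (n+1) m x| * |u x| := abs_mul _ _
      _ ≤ 1 * |u x| := mul_le_mul_of_nonneg_right
          (by rw [abs_of_nonneg h1.1]; exact h1.2) (abs_nonneg _)
      _ = |u x| := one_mul _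
  -- combine
  have b1 : α * (∫ x in Set.Icc a b, phi (n+1) m x * g x)
      ≤ α * ∫ x in Set.Icc a b, |g x| := mul_le_mul_of_nonneg_left hphig_le hα.le
  have b3 : (1/m) * (∫ x in Set.Icc a b, phi (n+1) m x * u x)
      ≤ (1/m) * ∫ x in Set.Icc a b, |u x| :=
    mul_le_mul_of_nonneg_left hphiu_le (by positivity)
  have Hchain : (C₀/m) * ((1/2) * (2/(3*m))^(n+1))
      ≤ α * (∫ x in Set.Icc a b, |g x|) + 2*m*(∫ x in Set.Icc a b, ‖gradient g x‖)
        + (1/m) * ∫ x in Set.Icc a b, |u x| := by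
    linarith [hA, hsplit, hLHSval]
  -- final arithmetic
  have hX : 0 ≤ ∫ x in Set.Icc a b, |g x| := integral_nonneg fun x => abs_nonneg _
  have hY : 0 ≤ ∫ x in Set.Icc a b, ‖gradient g x‖ := integral_nonneg fun x => norm_nonneg _
  have hZ : 0 ≤ ∫ x in Set.Icc a b, |u x| := integral_nonneg fun x => abs_nonneg _
  have hkey : (1/(2*m))^(n+1) ≤ (2/(3*m))^(n+1) := by
    apply pow_le_pow_left₀ (by positivity)
    rw [div_le_div_iff₀ (by positivity) (by positivity)]
    nlinarith
  have heq : C₀ / 2^((n+1)+2) * (1/m)^((n+1)+2) = (C₀/(4*m^2)) * (1/(2*m))^(n+1) := by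
    simp only [one_div, div_eq_mul_inv, mul_inv, mul_pow, inv_pow, pow_succ]
    ring
  have hstep : C₀ / 2^((n+1)+2) * (1/m)^((n+1)+2)
      ≤ (1/(2*m)) * ((C₀/m) * ((1/2) * (2/(3*m))^(n+1))) := by
    rw [heq]
    have e : (1/(2*m)) * ((C₀/m) * ((1/2) * (2/(3*m))^(n+1)))
        = (C₀/(4*m^2)) * (2/(3*m))^(n+1) := by ring
    rw [e]
    exact mul_le_mul_of_nonneg_left hkey (by positivity)
  have hfin : (1/(2*m)) * ((C₀/m) * ((1/2) * (2/(3*m))^(n+1)))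
      ≤ (1/(2*m)) * (α * (∫ x in Set.Icc a b, |g x|)
          + 2*m*(∫ x in Set.Icc a b, ‖gradient g x‖) + (1/m) * ∫ x in Set.Icc a b, |u x|) :=
    mul_le_mul_of_nonneg_left Hchain (by positivity)
  have hexp : (1/(2*m)) * (α * (∫ x in Set.Icc a b, |g x|)
        + 2*m*(∫ x in Set.Icc a b, ‖gradient g x‖) + (1/m) * ∫ x in Set.Icc a b, |u x|)
      = (α/(2*m)) * (∫ x in Set.Icc a b, |g x|) + (∫ x in Set.Icc a b, ‖gradient g x‖)
        + (1/(2*m^2)) * ∫ x in Set.Icc a b, |u x| := by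
    field_simp
  show C₀ / 2 ^ (n + 1 + 2) * (1 / m) ^ (n + 1 + 2)
      - 1 / (2 * m ^ 2) * ∫ (x : Fin (n+1) → ℝ) in Set.Icc a b, |u x|
      ≤ α / (2 * m) * (∫ (x : Fin (n+1) → ℝ) in Set.Icc a b, |g x|)
        + ∫ (x : Fin (n+1) → ℝ) in Set.Icc a b, ‖gradient g x‖
  linarith
end

section
/- Let d ≥ 1, λ > 0, K > 0, L > 0, and let f: ℝ^d → ℝ be twice continuously differentiable with ∫_{[0,1]^d} |∇f(x)|² dx ≥ λ, with |∇f(x)| ≤ K for all x ∈ [0,1]^d, and with ‖D²f(x)‖ ≤ L (operator norm of the Hessian) for all x ∈ [0,1]^d. Let m ∈ ℕ satisfy m ≥ 4√d·L/√λ, and partition [0,1]^d into the m^d congruent closed subcubes of side length 1/m. Then the number of subcubes Q in this partition such that |∇f(x)| ≥ √λ/4 for every x ∈ Q is at least (3λ / (4(1 + K²))) · m^d. -/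
open MeasureTheory Real
open scoped Classical

set_option maxHeartbeats 1000000 in
/-- If `f` is `C²` on a neighborhood of `[0,1]^d` with Dirichlet energy at least
`λ`, gradient bounded by `K` and Hessian operator norm bounded by `L` on `[0,1]^d`, and
`m ≥ 4√d·L/√λ`, then the number of closed subcubes of side `1/m` on which `|∇f| ≥ √λ/4` everywhere
is at least `(3λ/(4(1+K²))) m^d`. -/
theorem stmt4 (d : ℕ) (hd : 1 ≤ d) (lam K L : ℝ) (hlam : 0 < lam) (hK : 0 < K) (hL : 0 < L)
    (f : EuclideanSpace ℝ (Fin d) → ℝ) (hf : ContDiff ℝ 2 f)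
    (cube : Set (EuclideanSpace ℝ (Fin d)))
    (hcube : cube = {x : EuclideanSpace ℝ (Fin d) | ∀ i, x i ∈ Set.Icc (0 : ℝ) 1})
    (hint : lam ≤ ∫ x in cube, ‖gradient f x‖ ^ 2)
    (hgrad : ∀ x ∈ cube, ‖gradient f x‖ ≤ K)
    (hhess : ∀ x ∈ cube, ‖iteratedFDeriv ℝ 2 f x‖ ≤ L)
    (m : ℕ) (hm : 4 * Real.sqrt d * L / Real.sqrt lam ≤ (m : ℝ)) :
    3 * lam / (4 * (1 + K ^ 2)) * (m : ℝ) ^ d ≤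
      (((Finset.univ : Finset (Fin d → Fin m)).filter
        (fun v => ∀ x : EuclideanSpace ℝ (Fin d),
          (∀ i, x i ∈ Set.Icc (((v i : ℕ) : ℝ) / m) ((((v i : ℕ) : ℝ) + 1) / m)) →
          Real.sqrt lam / 4 ≤ ‖gradient f x‖)).card : ℝ) := by
  subst hcube
  set cube : Set (EuclideanSpace ℝ (Fin d)) := {x : EuclideanSpace ℝ (Fin d) | ∀ i, x i ∈ Set.Icc (0 : ℝ) 1} with hcube
  -- basic positivity facts
  have hdR : (0:ℝ) < d := by exact_mod_cast hd
  have hsd : (0:ℝ) < Real.sqrt d := Real.sqrt_pos.mpr hdR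
  have hsl : (0:ℝ) < Real.sqrt lam := Real.sqrt_pos.mpr hlam
  have hmpos : 0 < m := by
    rcases Nat.eq_zero_or_pos m with h | h
    · exfalso
      subst h
      have : (0:ℝ) < 4 * Real.sqrt d * L / Real.sqrt lam := by positivity
      simp only [Nat.cast_zero] at hm
      linarith
    · exact h
  have hmR : (0:ℝ) < m := by exact_mod_cast hmpos
  -- the subcubes
  set S : (Fin d → Fin m) → Set (EuclideanSpace ℝ (Fin d)) := fun v =>
    {x : EuclideanSpace ℝ (Fin d) | ∀ i, x i ∈ Set.Icc (((v i : ℕ) : ℝ) / m) ((((v i : ℕ) : ℝ) + 1) / m)} with hS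
  have hSconvex : ∀ v, Convex ℝ (S v) := by
    intro v x hx y hy a b ha hb hab
    intro i
    have : (a • x + b • y) i = a * x i + b * y i := rfl
    rw [Set.mem_setOf_eq] at hx hy
    simpa [this, smul_eq_mul] using (convex_Icc _ _) (hx i) (hy i) ha hb hab
  have hSsub : ∀ v, S v ⊆ cube := by
    intro v x hx i
    obtain ⟨h1, h2⟩ := hx i
    constructor
    · exact le_trans (by positivity) h1
    · refine h2.trans ?_
      rw [div_le_one hmR]
      have : (v i : ℕ) + 1 ≤ m := (v i).isLt
      exact_mod_cast this
  have hScl : ∀ v, IsClosed (S v) := by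
    intro v
    have : S v = ⋂ i, (EuclideanSpace.proj (𝕜 := ℝ) i) ⁻¹'
        (Set.Icc (((v i : ℕ) : ℝ) / m) ((((v i : ℕ) : ℝ) + 1) / m)) := by
      ext x
      simp only [Set.mem_iInter, Set.mem_preimage]
      rfl
    rw [this]
    exact isClosed_iInter fun i => isClosed_Icc.preimage (EuclideanSpace.proj i).continuous
  have hcubecl : IsClosed cube := by
    have : cube = ⋂ i, (EuclideanSpace.proj (𝕜 := ℝ) i) ⁻¹' (Set.Icc (0:ℝ) 1) := by
      ext x
      simp only [Set.mem_iInter, Set.mem_preimage]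
      rfl
    rw [this]
    exact isClosed_iInter fun i => isClosed_Icc.preimage (EuclideanSpace.proj i).continuous
  have hcubecomp : IsCompact cube := by
    refine Metric.isCompact_of_isClosed_isBounded hcubecl ?_
    refine isBounded_iff_forall_norm_le.2 ⟨Real.sqrt d, fun x hx => ?_⟩
    rw [EuclideanSpace.norm_eq]
    have hptw : ∀ i, ‖x i‖ ^ 2 ≤ 1 := by
      intro i
      obtain ⟨h1, h2⟩ := hx i
      rw [Real.norm_eq_abs, abs_of_nonneg h1]
      nlinarith
    have hsum : (∑ i, ‖x i‖ ^ 2) ≤ (d:ℝ) := by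
      calc (∑ i, ‖x i‖ ^ 2) ≤ ∑ _i : Fin d, (1:ℝ) := Finset.sum_le_sum fun i _ => hptw i
        _ = d := by simp
    exact Real.sqrt_le_sqrt hsum
  have hScomp : ∀ v, IsCompact (S v) := fun v =>
    hcubecomp.of_isClosed_subset (hScl v) (hSsub v)
  -- every point of the cube lies in some subcube
  have hstep : ∀ t : ℝ, 0 ≤ t → t ≤ 1 →
      ∃ k : Fin m, ((k:ℕ):ℝ)/m ≤ t ∧ t ≤ (((k:ℕ):ℝ)+1)/m := by
    intro t h0 h1
    refine ⟨⟨min ⌊(m:ℝ)*t⌋₊ (m-1),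
      lt_of_le_of_lt (min_le_right _ _) (Nat.sub_lt hmpos one_pos)⟩, ?_, ?_⟩
    · rw [div_le_iff₀ hmR]
      calc ((min ⌊(m:ℝ)*t⌋₊ (m-1) : ℕ):ℝ) ≤ ⌊(m:ℝ)*t⌋₊ := by exact_mod_cast min_le_left _ _
        _ ≤ (m:ℝ) * t := Nat.floor_le (by positivity)
        _ = t * m := mul_comm _ _
    · rw [le_div_iff₀ hmR]
      simp only [Fin.val_mk]
      rcases le_or_gt (⌊(m:ℝ) * t⌋₊) (m-1) with h | h
      · have hkk : min ⌊(m:ℝ)*t⌋₊ (m-1) = ⌊(m:ℝ)*t⌋₊ := min_eq_left h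
        have hfl : (m:ℝ) * t < ⌊(m:ℝ)*t⌋₊ + 1 := Nat.lt_floor_add_one _
        rw [hkk]
        push_cast
        nlinarith
      · have hkk : min ⌊(m:ℝ)*t⌋₊ (m-1) = m - 1 := min_eq_right h.le
        have hm1 : ((m-1 : ℕ):ℝ) + 1 = m := by
          have : (m - 1) + 1 = m := Nat.succ_pred_eq_of_pos hmpos
          exact_mod_cast this
        rw [hkk, hm1]
        nlinarith
  have hcover : ∀ x ∈ cube, ∃ v, x ∈ S v := by
    intro x hx
    choose k hk1 hk2 using fun i => hstep (x i) (hx i).1 (hx i).2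
    exact ⟨k, fun i => ⟨hk1 i, hk2 i⟩⟩
  -- volume of each subcube
  have hvol : ∀ v, volume (S v) = ENNReal.ofReal ((1:ℝ)/m) ^ d := by
    intro v
    have hSeq : S v = (MeasurableEquiv.toLp 2 (Fin d → ℝ)).symm ⁻¹'
        (Set.univ.pi fun i => Set.Icc (((v i : ℕ):ℝ)/m) ((((v i : ℕ):ℝ)+1)/m)) := by
      ext x
      rw [Set.mem_preimage, Set.mem_univ_pi]
      exact Iff.rfl
    rw [hSeq, (EuclideanSpace.volume_preserving_symm_measurableEquiv_toLp (Fin d)).measure_preimage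
      ((MeasurableSet.univ_pi fun i => measurableSet_Icc).nullMeasurableSet)]
    rw [volume_pi_pi]
    have hlen : ∀ i : Fin d, ENNReal.ofReal ((((v i : ℕ):ℝ)+1)/m - ((v i : ℕ):ℝ)/m)
        = ENNReal.ofReal ((1:ℝ)/m) := by
      intro i
      congr 1
      rw [div_sub_div_same, add_sub_cancel_left]
    calc (∏ i, volume (Set.Icc (((v i : ℕ):ℝ)/m) ((((v i : ℕ):ℝ)+1)/m)))
        = ∏ i : Fin d, ENNReal.ofReal ((1:ℝ)/m) := by
          refine Finset.prod_congr rfl fun i _ => ?_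
          rw [Real.volume_Icc, hlen i]
      _ = ENNReal.ofReal ((1:ℝ)/m) ^ d := by
          rw [Finset.prod_const, Finset.card_univ, Fintype.card_fin]
  have hvolT : ∀ v, (volume (S v)).toReal = ((m:ℝ)^d)⁻¹ := by
    intro v
    rw [hvol v, ENNReal.toReal_pow, ENNReal.toReal_ofReal (by positivity)]
    rw [one_div, inv_pow]
  have hvolfin : ∀ v, volume (S v) < ⊤ := by
    intro v
    rw [hvol v]
    exact ENNReal.pow_lt_top ENNReal.ofReal_lt_top
  -- gradient and second derivative facts
  have hfd1 : ContDiff ℝ 1 (fderiv ℝ f) := hf.fderiv_right (by norm_num)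
  have hdf : Differentiable ℝ (fderiv ℝ f) := hfd1.differentiable one_ne_zero
  have hgradnorm : ∀ x y : EuclideanSpace ℝ (Fin d), ‖gradient f y - gradient f x‖ = ‖fderiv ℝ f y - fderiv ℝ f x‖ := by
    intro x y
    rw [show gradient f y = (InnerProductSpace.toDual ℝ (EuclideanSpace ℝ (Fin d))).symm (fderiv ℝ f y) from rfl,
      show gradient f x = (InnerProductSpace.toDual ℝ (EuclideanSpace ℝ (Fin d))).symm (fderiv ℝ f x) from rfl,
      ← map_sub, LinearIsometryEquiv.norm_map]
  have hgc : Continuous fun x : EuclideanSpace ℝ (Fin d) => gradient f x := by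
    have : Continuous (fderiv ℝ f) := hfd1.continuous
    exact (InnerProductSpace.toDual ℝ (EuclideanSpace ℝ (Fin d))).symm.continuous.comp this
  have hop : ∀ x ∈ cube, ‖fderiv ℝ (fderiv ℝ f) x‖ ≤ L := by
    intro x hx
    refine ContinuousLinearMap.opNorm_le_bound _ hL.le fun u => ?_
    refine ContinuousLinearMap.opNorm_le_bound _ (by positivity) fun w => ?_
    have h2 : fderiv ℝ (fderiv ℝ f) x u w = iteratedFDeriv ℝ 2 f x ![u, w] := by
      rw [iteratedFDeriv_two_apply]
      simp
    have h3 : ‖iteratedFDeriv ℝ 2 f x ![u, w]‖ ≤ ‖iteratedFDeriv ℝ 2 f x‖ * (‖u‖ * ‖w‖) := by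
      have := (iteratedFDeriv ℝ 2 f x).le_opNorm ![u, w]
      simpa [Fin.prod_univ_two, mul_assoc] using this
    rw [h2]
    calc ‖iteratedFDeriv ℝ 2 f x ![u, w]‖ ≤ ‖iteratedFDeriv ℝ 2 f x‖ * (‖u‖ * ‖w‖) := h3
      _ ≤ L * (‖u‖ * ‖w‖) := by
          have := hhess x hx
          have hn : (0:ℝ) ≤ ‖u‖ * ‖w‖ := by positivity
          nlinarith
      _ = L * ‖u‖ * ‖w‖ := by ring
  have hlip : ∀ (s : Set (EuclideanSpace ℝ (Fin d))), Convex ℝ s → s ⊆ cube →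
      ∀ x ∈ s, ∀ y ∈ s, ‖gradient f y - gradient f x‖ ≤ L * ‖y - x‖ := by
    intro s hs hsub x hx y hy
    rw [hgradnorm]
    exact Convex.norm_image_sub_le_of_norm_fderiv_le (fun z _ => hdf z)
      (fun z hz => hop z (hsub hz)) hs hx hy
  -- measurability / integrability
  have hcubemeas : MeasurableSet cube := hcubecl.measurableSet
  have hSmeas : ∀ v, MeasurableSet (S v) := fun v => (hScl v).measurableSet
  set g : EuclideanSpace ℝ (Fin d) → ℝ := fun x => ‖gradient f x‖ ^ 2 with hgdef
  have hgcont : Continuous g := hgc.norm.pow 2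
  have hgnn : ∀ x, 0 ≤ g x := fun x => by positivity
  have hint_cube : IntegrableOn g cube := hgcont.continuousOn.integrableOn_compact hcubecomp
  have hint_S : ∀ v, IntegrableOn g (S v) := fun v => hint_cube.mono_set (hSsub v)
  have hind_int : ∀ v, Integrable ((S v).indicator g) :=
    fun v => (integrable_indicator_iff (hSmeas v)).2 (hint_S v)
  -- pointwise comparison with the sum of indicators
  have hpt : ∀ x, cube.indicator g x ≤ ∑ v : Fin d → Fin m, (S v).indicator g x := by
    intro x
    by_cases hx : x ∈ cube
    · rw [Set.indicator_of_mem hx]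
      obtain ⟨v, hv⟩ := hcover x hx
      calc g x = (S v).indicator g x := (Set.indicator_of_mem hv g).symm
        _ ≤ ∑ w : Fin d → Fin m, (S w).indicator g x :=
          Finset.single_le_sum
            (fun w _ => Set.indicator_nonneg (fun y _ => hgnn y) x) (Finset.mem_univ v)
    · rw [Set.indicator_of_notMem hx]
      exact Finset.sum_nonneg fun w _ => Set.indicator_nonneg (fun y _ => hgnn y) x
  have hI1 : (∫ x in cube, g x) ≤ ∑ v : Fin d → Fin m, ∫ x in S v, g x := by
    have h1 : (∫ x in cube, g x) = ∫ x, cube.indicator g x := (integral_indicator hcubemeas).symm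
    have h2 : (∫ x, ∑ v : Fin d → Fin m, (S v).indicator g x)
        = ∑ v : Fin d → Fin m, ∫ x in S v, g x := by
      rw [integral_finset_sum _ fun v _ => hind_int v]
      exact Finset.sum_congr rfl fun v _ => integral_indicator (hSmeas v)
    rw [h1, ← h2]
    exact integral_mono ((integrable_indicator_iff hcubemeas).2 hint_cube)
      (integrable_finset_sum _ fun v _ => hind_int v) hpt
  -- uniform bound on every subcube
  have hboundK : ∀ v, (∫ x in S v, g x) ≤ K^2 * ((m:ℝ)^d)⁻¹ := by
    intro v
    have hb : ∀ x ∈ S v, g x ≤ K^2 := by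
      intro x hx
      have := hgrad x (hSsub v hx)
      simpa [hgdef] using pow_le_pow_left₀ (norm_nonneg _) this 2
    calc (∫ x in S v, g x) ≤ ∫ _x in S v, K^2 :=
        setIntegral_mono_on (hint_S v) (integrableOn_const (hvolfin v).ne)
          (hSmeas v) hb
      _ = (volume (S v)).toReal * K^2 := by rw [setIntegral_const, smul_eq_mul, measureReal_def]
      _ = K^2 * ((m:ℝ)^d)⁻¹ := by rw [hvolT v]; ring
  -- distance bound inside a subcube
  have hdiam : ∀ v, ∀ y ∈ S v, ∀ x0 ∈ S v, ‖y - x0‖ ≤ Real.sqrt d / m := by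
    intro v y hy x0 hx0
    have hcoord : ∀ i, ‖(y - x0) i‖ ^ 2 ≤ (1/(m:ℝ))^2 := by
      intro i
      obtain ⟨h11, h12⟩ := hy i
      obtain ⟨h21, h22⟩ := hx0 i
      have hsub : (y - x0) i = y i - x0 i := rfl
      rw [hsub, Real.norm_eq_abs]
      have hlen : (((v i : ℕ):ℝ)+1)/m - ((v i : ℕ):ℝ)/m = 1/m := by
        rw [div_sub_div_same, add_sub_cancel_left]
      have habs : |y i - x0 i| ≤ 1/(m:ℝ) := by
        rw [abs_le]
        constructor
        · linarith
        · linarith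
      exact pow_le_pow_left₀ (abs_nonneg _) habs 2
    rw [EuclideanSpace.norm_eq]
    have hsum : (∑ i, ‖(y - x0) i‖^2) ≤ (d:ℝ) * (1/(m:ℝ))^2 := by
      calc (∑ i, ‖(y - x0) i‖^2) ≤ ∑ _i : Fin d, (1/(m:ℝ))^2 :=
          Finset.sum_le_sum fun i _ => hcoord i
        _ = (d:ℝ) * (1/(m:ℝ))^2 := by
          rw [Finset.sum_const, Finset.card_univ, Fintype.card_fin, nsmul_eq_mul]
    calc Real.sqrt (∑ i, ‖(y - x0) i‖^2) ≤ Real.sqrt ((d:ℝ) * (1/(m:ℝ))^2) :=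
        Real.sqrt_le_sqrt hsum
      _ = Real.sqrt d * (1/(m:ℝ)) := by
          rw [Real.sqrt_mul (le_of_lt hdR), Real.sqrt_sq (by positivity)]
      _ = Real.sqrt d / m := by ring
  -- bound on bad subcubes
  have hboundBad : ∀ v : Fin d → Fin m,
      ¬(∀ x : EuclideanSpace ℝ (Fin d),
          (∀ i, x i ∈ Set.Icc (((v i : ℕ) : ℝ) / m) ((((v i : ℕ) : ℝ) + 1) / m)) →
          Real.sqrt lam / 4 ≤ ‖gradient f x‖) →
      (∫ x in S v, g x) ≤ lam/4 * ((m:ℝ)^d)⁻¹ := by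
    intro v hv
    push_neg at hv
    obtain ⟨x0, hx0S, hx0lt⟩ := hv
    have hx0S' : x0 ∈ S v := hx0S
    have hptb : ∀ y ∈ S v, g y ≤ lam/4 := by
      intro y hy
      have h2 := hlip (S v) (hSconvex v) (hSsub v) x0 hx0S' y hy
      have h3 : ‖y - x0‖ ≤ Real.sqrt d / m := hdiam v y hy x0 hx0S'
      have h5 : 4 * Real.sqrt d * L ≤ (m:ℝ) * Real.sqrt lam := by
        rw [div_le_iff₀ hsl] at hm
        linarith
      have h4 : L * (Real.sqrt d / m) ≤ Real.sqrt lam / 4 := by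
        rw [mul_div_assoc', div_le_div_iff₀ hmR (by norm_num : (0:ℝ) < 4)]
        nlinarith
      have htri : ‖gradient f y‖ ≤ ‖gradient f x0‖ + ‖gradient f y - gradient f x0‖ := by
        have := norm_sub_norm_le (gradient f y) (gradient f x0)
        linarith
      have hLs : L * ‖y - x0‖ ≤ L * (Real.sqrt d / m) := mul_le_mul_of_nonneg_left h3 hL.le
      have h6 : ‖gradient f y‖ ≤ Real.sqrt lam / 2 := by linarith
      have h7 : g y ≤ (Real.sqrt lam / 2)^2 := by
        simpa [hgdef] using pow_le_pow_left₀ (norm_nonneg _) h6 2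
      have h8 : (Real.sqrt lam / 2)^2 = lam / 4 := by
        rw [div_pow, Real.sq_sqrt hlam.le]
        norm_num
      linarith
    calc (∫ x in S v, g x) ≤ ∫ _x in S v, lam/4 :=
        setIntegral_mono_on (hint_S v) (integrableOn_const (hvolfin v).ne)
          (hSmeas v) hptb
      _ = (volume (S v)).toReal * (lam/4) := by rw [setIntegral_const, smul_eq_mul, measureReal_def]
      _ = lam/4 * ((m:ℝ)^d)⁻¹ := by rw [hvolT v]; ring
  -- split the sum into good and bad subcubes
  set P : (Fin d → Fin m) → Prop := fun v => ∀ x : EuclideanSpace ℝ (Fin d),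
      (∀ i, x i ∈ Set.Icc (((v i : ℕ) : ℝ) / m) ((((v i : ℕ) : ℝ) + 1) / m)) →
      Real.sqrt lam / 4 ≤ ‖gradient f x‖ with hPdef
  set good : Finset (Fin d → Fin m) := Finset.univ.filter P with hgooddef
  set bad : Finset (Fin d → Fin m) := Finset.univ.filter (fun v => ¬ P v) with hbaddef
  have hsplit : (∑ v : Fin d → Fin m, ∫ x in S v, g x)
      = (∑ v ∈ good, ∫ x in S v, g x) + ∑ v ∈ bad, ∫ x in S v, g x :=
    (Finset.sum_filter_add_sum_filter_not Finset.univ P _).symm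
  have hgoodsum : (∑ v ∈ good, ∫ x in S v, g x)
      ≤ good.card • (K^2 * ((m:ℝ)^d)⁻¹) :=
    Finset.sum_le_card_nsmul _ _ _ fun v _ => hboundK v
  have hbadsum : (∑ v ∈ bad, ∫ x in S v, g x)
      ≤ bad.card • (lam/4 * ((m:ℝ)^d)⁻¹) := by
    refine Finset.sum_le_card_nsmul _ _ _ fun v hv => ?_
    rw [hbaddef, Finset.mem_filter] at hv
    exact hboundBad v hv.2
  have hbadcard : (bad.card : ℝ) ≤ (m:ℝ) ^ d := by
    have h1 : bad.card ≤ (Finset.univ : Finset (Fin d → Fin m)).card :=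
      Finset.card_le_univ _
    have h2 : (Finset.univ : Finset (Fin d → Fin m)).card = m ^ d := by
      rw [Finset.card_univ, Fintype.card_fun, Fintype.card_fin, Fintype.card_fin]
    have : bad.card ≤ m ^ d := h2 ▸ h1
    calc (bad.card : ℝ) ≤ ((m ^ d : ℕ) : ℝ) := by exact_mod_cast this
      _ = (m:ℝ) ^ d := by push_cast; ring
  have hP0 : (0:ℝ) < (m:ℝ)^d := by positivity
  have hNnn : (0:ℝ) ≤ (good.card : ℝ) := Nat.cast_nonneg _
  have hchain : lam ≤ (good.card : ℝ) * (K^2 * ((m:ℝ)^d)⁻¹) + lam/4 := by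
    have e1 : lam ≤ ∑ v : Fin d → Fin m, ∫ x in S v, g x := le_trans hint hI1
    have e2 : (bad.card : ℝ) * (lam/4 * ((m:ℝ)^d)⁻¹) ≤ lam/4 := by
      have : (bad.card : ℝ) * (lam/4 * ((m:ℝ)^d)⁻¹) ≤ (m:ℝ)^d * (lam/4 * ((m:ℝ)^d)⁻¹) :=
        mul_le_mul_of_nonneg_right hbadcard (by positivity)
      calc (bad.card : ℝ) * (lam/4 * ((m:ℝ)^d)⁻¹)
          ≤ (m:ℝ)^d * (lam/4 * ((m:ℝ)^d)⁻¹) := this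
        _ = lam/4 := by
            field_simp
    have e3 := hgoodsum
    have e4 := hbadsum
    rw [nsmul_eq_mul] at e3 e4
    rw [hsplit] at e1
    linarith
  -- final arithmetic
  have hA : 3*lam/4 * ((m:ℝ)^d) ≤ (good.card : ℝ) * K^2 := by
    have h1 : 3*lam/4 ≤ (good.card : ℝ) * K^2 * ((m:ℝ)^d)⁻¹ := by
      have : (good.card : ℝ) * (K^2 * ((m:ℝ)^d)⁻¹)
          = (good.card : ℝ) * K^2 * ((m:ℝ)^d)⁻¹ := by ring
      linarith [hchain, this ▸ hchain]
    calc 3*lam/4 * ((m:ℝ)^d) ≤ ((good.card : ℝ) * K^2 * ((m:ℝ)^d)⁻¹) * ((m:ℝ)^d) :=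
        mul_le_mul_of_nonneg_right h1 hP0.le
      _ = (good.card : ℝ) * K^2 := by field_simp
  rw [div_mul_eq_mul_div, div_le_iff₀ (by positivity : (0:ℝ) < 4*(1+K^2))]
  nlinarith [hA, hNnn]
end

section
/- Let (Ω, μ) be a measure space and let f, g: Ω → [0, ∞) be measurable functions with ∫ f dμ = ∫ g dμ = 1 and g(x) > 0 for μ-almost every x. Suppose ∫ (f − g)²/g dμ < ∞. Then the integral ∫ f·log(f/g) dμ is well defined in [−∞, ∞) (its positive part is integrable) and satisfies ∫ f·log(f/g) dμ ≤ ∫ (f − g)²/g dμ, with the convention that f(x)·log(f(x)/g(x)) = 0 whenever f(x) = 0. -/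
open MeasureTheory Real

/-- For probability densities `f, g` with `g > 0` a.e. and finite χ²-type
divergence `∫ (f−g)²/g dμ`, the KL integrand `f·log(f/g)` (with the convention that it vanishes
where `f = 0`, which is automatic since `0 * log(0/g) = 0`) has integrable positive part, and
the extended-real integral `∫ f·log(f/g) dμ` is at most `∫ (f−g)²/g dμ`; the latter inequality is
expressed as `∫⁻ (f·log(f/g))₊ ≤ ∫ (f−g)²/g dμ + ∫⁻ (f·log(f/g))₋`. -/
theorem stmt6 {Ω : Type*} [MeasurableSpace Ω] (μ : Measure Ω)
    (f g : Ω → ℝ) (hfm : Measurable f) (hgm : Measurable g)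
    (hf0 : ∀ x, 0 ≤ f x) (hg0 : ∀ x, 0 ≤ g x)
    (hfint : ∫ x, f x ∂μ = 1) (hgint : ∫ x, g x ∂μ = 1)
    (hgpos : ∀ᵐ x ∂μ, 0 < g x)
    (hchi : Integrable (fun x => (f x - g x) ^ 2 / g x) μ) :
    (∫⁻ x, ENNReal.ofReal (f x * Real.log (f x / g x)) ∂μ) < ⊤ ∧
    (∫⁻ x, ENNReal.ofReal (f x * Real.log (f x / g x)) ∂μ) ≤
      ENNReal.ofReal (∫ x, (f x - g x) ^ 2 / g x ∂μ) +
        ∫⁻ x, ENNReal.ofReal (-(f x * Real.log (f x / g x))) ∂μ := by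
  have hfi : Integrable f μ := by
    by_contra h
    rw [integral_undef h] at hfint; norm_num at hfint
  have hgi : Integrable g μ := by
    by_contra h
    rw [integral_undef h] at hgint; norm_num at hgint
  set u : Ω → ℝ := fun x => f x * Real.log (f x / g x) with hu
  set φ : Ω → ℝ := fun x => (f x - g x) + (f x - g x) ^ 2 / g x with hφ
  have hsub : Integrable (fun x => f x - g x) μ := hfi.sub hgi
  have hφi : Integrable φ μ := hsub.add hchi
  have hφint : ∫ x, φ x ∂μ = ∫ x, (f x - g x) ^ 2 / g x ∂μ := by
    have h1 : ∫ x, φ x ∂μ = (∫ x, (f x - g x) ∂μ) + ∫ x, (f x - g x) ^ 2 / g x ∂μ :=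
      integral_add hsub hchi
    rw [h1, integral_sub hfi hgi, hfint, hgint]
    ring
  -- pointwise a.e. bound u ≤ φ
  have hpt : ∀ᵐ x ∂μ, u x ≤ φ x := by
    filter_upwards [hgpos] with x hg
    have hgne : g x ≠ 0 := ne_of_gt hg
    rcases eq_or_lt_of_le (hf0 x) with h | h
    · have h1 : u x = 0 := by simp [hu, ← h]
      have h2 : φ x = 0 := by
        simp only [hφ, ← h]
        field_simp
        ring
      rw [h1, h2]
    · have h1 : Real.log (f x / g x) ≤ f x / g x - 1 :=
        Real.log_le_sub_one_of_pos (div_pos h hg)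
      have h2 : f x * Real.log (f x / g x) ≤ f x * (f x / g x - 1) :=
        mul_le_mul_of_nonneg_left h1 (hf0 x)
      have h3 : f x * (f x / g x - 1) = φ x := by
        simp only [hφ]; field_simp; ring
      simpa [hu, h3] using h2
  -- nonnegativity of the χ² integral
  have hchi_nonneg : 0 ≤ ∫ x, (f x - g x) ^ 2 / g x ∂μ := by
    apply integral_nonneg_of_ae
    filter_upwards [hgpos] with x hg
    positivity
  -- finiteness of the positive/negative parts of φ
  have hCfin : (∫⁻ x, ENNReal.ofReal (φ x) ∂μ) < ⊤ := by
    refine lt_of_le_of_lt (lintegral_mono fun x => ?_) hφi.2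
    calc ENNReal.ofReal (φ x) ≤ ENNReal.ofReal ‖φ x‖ :=
          ENNReal.ofReal_le_ofReal (Real.norm_eq_abs _ ▸ le_abs_self _)
      _ = ‖φ x‖ₑ := ofReal_norm_eq_enorm _
  have hDfin : (∫⁻ x, ENNReal.ofReal (-(φ x)) ∂μ) < ⊤ := by
    refine lt_of_le_of_lt (lintegral_mono fun x => ?_) hφi.2
    calc ENNReal.ofReal (-(φ x)) ≤ ENNReal.ofReal ‖φ x‖ :=
          ENNReal.ofReal_le_ofReal (Real.norm_eq_abs _ ▸ neg_le_abs _)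
      _ = ‖φ x‖ₑ := ofReal_norm_eq_enorm _
  -- key identity: ∫⁻ φ₊ = ofReal (∫ φ) + ∫⁻ φ₋
  have hkey : (∫⁻ x, ENNReal.ofReal (φ x) ∂μ) =
      ENNReal.ofReal (∫ x, φ x ∂μ) + ∫⁻ x, ENNReal.ofReal (-(φ x)) ∂μ := by
    have heq := integral_eq_lintegral_pos_part_sub_lintegral_neg_part hφi
    have h0 : 0 ≤ ∫ x, φ x ∂μ := hφint ▸ hchi_nonneg
    have hC := hCfin.ne
    have hD := hDfin.ne
    have : (∫⁻ x, ENNReal.ofReal (φ x) ∂μ).toReal =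
        (∫ x, φ x ∂μ) + (∫⁻ x, ENNReal.ofReal (-(φ x)) ∂μ).toReal := by
      rw [heq]; ring
    calc (∫⁻ x, ENNReal.ofReal (φ x) ∂μ)
        = ENNReal.ofReal ((∫⁻ x, ENNReal.ofReal (φ x) ∂μ).toReal) :=
          (ENNReal.ofReal_toReal hC).symm
      _ = ENNReal.ofReal (∫ x, φ x ∂μ) +
            ENNReal.ofReal ((∫⁻ x, ENNReal.ofReal (-(φ x)) ∂μ).toReal) := by
          rw [this, ENNReal.ofReal_add h0 ENNReal.toReal_nonneg]
      _ = ENNReal.ofReal (∫ x, φ x ∂μ) + ∫⁻ x, ENNReal.ofReal (-(φ x)) ∂μ := by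
          rw [ENNReal.ofReal_toReal hD]
  -- comparisons of lintegrals
  have hAC : (∫⁻ x, ENNReal.ofReal (u x) ∂μ) ≤ ∫⁻ x, ENNReal.ofReal (φ x) ∂μ :=
    lintegral_mono_ae (hpt.mono fun x hx => ENNReal.ofReal_le_ofReal hx)
  have hDB : (∫⁻ x, ENNReal.ofReal (-(φ x)) ∂μ) ≤ ∫⁻ x, ENNReal.ofReal (-(u x)) ∂μ :=
    lintegral_mono_ae (hpt.mono fun x hx => ENNReal.ofReal_le_ofReal (by linarith))
  constructor
  · exact lt_of_le_of_lt hAC hCfin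
  · calc (∫⁻ x, ENNReal.ofReal (u x) ∂μ)
        ≤ ∫⁻ x, ENNReal.ofReal (φ x) ∂μ := hAC
      _ = ENNReal.ofReal (∫ x, φ x ∂μ) + ∫⁻ x, ENNReal.ofReal (-(φ x)) ∂μ := hkey
      _ ≤ ENNReal.ofReal (∫ x, (f x - g x) ^ 2 / g x ∂μ) +
            ∫⁻ x, ENNReal.ofReal (-(u x)) ∂μ := by
          rw [hφint]; exact add_le_add le_rfl hDB
end

section
/- Let (Ω, μ) be a measure space and let f, g: Ω → [0, ∞) be measurable functions with ∫ f dμ = ∫ g dμ = 1 and g(x) ≥ 1/2 for μ-almost every x. Then the Kullback–Leibler divergence satisfies KL(f‖g) := ∫ f·log(f/g) dμ ≤ 2 ∫ (f − g)² dμ, where the right-hand side may be +∞ and the convention f·log(f/g) = 0 on {f = 0} is used. -/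
open MeasureTheory Real

lemma key_real (a b : ℝ) (ha : 0 ≤ a) (hb : 1/2 ≤ b) :
    a * Real.log (a / b) ≤ 2 * (a - b) ^ 2 + (a - b) := by
  have hb0 : (0:ℝ) < b := by linarith
  rcases eq_or_lt_of_le ha with h0 | h0
  · rw [← h0]
    simp only [zero_mul]
    nlinarith
  · have hlog : Real.log (a / b) ≤ a / b - 1 :=
      Real.log_le_sub_one_of_pos (by positivity)
    have h1 : a * Real.log (a/b) ≤ a * (a/b - 1) :=
      mul_le_mul_of_nonneg_left hlog ha
    have h2 : a * (a/b - 1) = (a-b)^2 / b + (a - b) := by field_simp; ring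
    have h3 : (a-b)^2 / b ≤ 2 * (a-b)^2 := by
      rw [div_le_iff₀ hb0]
      nlinarith [sq_nonneg (a-b)]
    linarith

lemma key_ennreal (a b : ℝ) (ha : 0 ≤ a) (hb : 1/2 ≤ b) :
    ENNReal.ofReal (a * Real.log (a/b)) + ENNReal.ofReal (b - a) ≤
      ENNReal.ofReal (2 * (a-b)^2) + ENNReal.ofReal (a - b) +
        ENNReal.ofReal (-(a * Real.log (a/b))) := by
  have hb0 : (0:ℝ) < b := by linarith
  have hk := key_real a b ha hb
  rcases le_or_gt b a with hba | hab
  · rw [ENNReal.ofReal_of_nonpos (by linarith : b - a ≤ 0), add_zero]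
    calc ENNReal.ofReal (a * Real.log (a/b))
        ≤ ENNReal.ofReal (2 * (a-b)^2 + (a-b)) := ENNReal.ofReal_le_ofReal hk
      _ = ENNReal.ofReal (2 * (a-b)^2) + ENNReal.ofReal (a-b) := by
          rw [ENNReal.ofReal_add (by positivity) (by linarith)]
      _ ≤ _ := le_self_add
  · have hlog : Real.log (a/b) ≤ 0 :=
      Real.log_nonpos (by positivity) ((div_le_one hb0).2 hab.le)
    have hh : a * Real.log (a/b) ≤ 0 := mul_nonpos_of_nonneg_of_nonpos ha hlog
    rw [ENNReal.ofReal_of_nonpos hh, ENNReal.ofReal_of_nonpos (by linarith : a - b ≤ 0),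
      zero_add, add_zero]
    calc ENNReal.ofReal (b - a)
        ≤ ENNReal.ofReal (2 * (a-b)^2 + -(a * Real.log (a/b))) :=
          ENNReal.ofReal_le_ofReal (by linarith)
      _ = _ := ENNReal.ofReal_add (by positivity) (by linarith)

/-- For probability densities `f, g` with `g ≥ 1/2` a.e., the Kullback–Leibler
divergence `KL(f‖g) = ∫ f·log(f/g) dμ` (with the convention `f·log(f/g) = 0` on `{f = 0}`, which
is automatic) satisfies `KL(f‖g) ≤ 2 ∫ (f−g)² dμ`, where the right-hand side may be `+∞`.  This
is expressed in the extended sense as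
`∫⁻ (f·log(f/g))₊ ≤ 2 ∫⁻ (f−g)² + ∫⁻ (f·log(f/g))₋`. -/
theorem stmt7 {Ω : Type*} [MeasurableSpace Ω] (μ : Measure Ω)
    (f g : Ω → ℝ) (hfm : Measurable f) (hgm : Measurable g)
    (hf0 : ∀ x, 0 ≤ f x) (hg0 : ∀ x, 0 ≤ g x)
    (hfint : ∫ x, f x ∂μ = 1) (hgint : ∫ x, g x ∂μ = 1)
    (hghalf : ∀ᵐ x ∂μ, 1 / 2 ≤ g x) :
    (∫⁻ x, ENNReal.ofReal (f x * Real.log (f x / g x)) ∂μ) ≤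
      2 * (∫⁻ x, ENNReal.ofReal ((f x - g x) ^ 2) ∂μ) +
        ∫⁻ x, ENNReal.ofReal (-(f x * Real.log (f x / g x))) ∂μ := by
  have hfi : Integrable f μ := by
    by_contra h
    rw [integral_undef h] at hfint
    norm_num at hfint
  have hgi : Integrable g μ := by
    by_contra h
    rw [integral_undef h] at hgint
    norm_num at hgint
  have hsub : Integrable (fun x => f x - g x) μ := hfi.sub hgi
  have hzero : ∫ x, (f x - g x) ∂μ = 0 := by
    rw [integral_sub hfi hgi, hfint, hgint]; ring
  -- finiteness of pos/neg parts of f - g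
  have hfin1 : (∫⁻ x, ENNReal.ofReal (f x - g x) ∂μ) < ⊤ :=
    lt_of_le_of_lt (lintegral_ofReal_le_lintegral_enorm _) hsub.2
  have hfin2 : (∫⁻ x, ENNReal.ofReal (-(f x - g x)) ∂μ) < ⊤ :=
    lt_of_le_of_lt (lintegral_ofReal_le_lintegral_enorm _) hsub.neg.2
  have hc : (∫⁻ x, ENNReal.ofReal (g x - f x) ∂μ) =
      (∫⁻ x, ENNReal.ofReal (f x - g x) ∂μ) := by
    have := integral_eq_lintegral_pos_part_sub_lintegral_neg_part hsub
    rw [hzero] at this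
    have h2 : (∫⁻ x, ENNReal.ofReal (g x - f x) ∂μ) =
        ∫⁻ x, ENNReal.ofReal (-(f x - g x)) ∂μ := by
      congr 1; ext x; ring_nf
    rw [h2]
    have := sub_eq_zero.mp this.symm
    exact (ENNReal.toReal_eq_toReal_iff' hfin2.ne hfin1.ne).1 this.symm
  -- measurability
  have hm1 : Measurable fun x => ENNReal.ofReal (f x * Real.log (f x / g x)) :=
    (hfm.mul ((hfm.div hgm).log)).ennreal_ofReal
  have hm2 : Measurable fun x => ENNReal.ofReal (g x - f x) :=
    (hgm.sub hfm).ennreal_ofReal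
  have hm3 : Measurable fun x => ENNReal.ofReal (2 * (f x - g x)^2) :=
    ((measurable_const.mul ((hfm.sub hgm).pow_const 2))).ennreal_ofReal
  have hm4 : Measurable fun x => ENNReal.ofReal (f x - g x) :=
    (hfm.sub hgm).ennreal_ofReal
  -- integrate the pointwise inequality
  have hmain :
      (∫⁻ x, ENNReal.ofReal (f x * Real.log (f x / g x)) ∂μ) +
        (∫⁻ x, ENNReal.ofReal (g x - f x) ∂μ) ≤
      ((∫⁻ x, ENNReal.ofReal (2 * (f x - g x)^2) ∂μ) +
        (∫⁻ x, ENNReal.ofReal (f x - g x) ∂μ)) +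
        (∫⁻ x, ENNReal.ofReal (-(f x * Real.log (f x / g x))) ∂μ) := by
    rw [← lintegral_add_left hm1, ← lintegral_add_left hm3,
      ← lintegral_add_left (by exact hm3.add hm4 : Measurable fun x =>
        ENNReal.ofReal (2 * (f x - g x)^2) + ENNReal.ofReal (f x - g x))]
    refine lintegral_mono_ae ?_
    filter_upwards [hghalf] with x hx
    exact key_ennreal (f x) (g x) (hf0 x) hx
  have h2B : (∫⁻ x, ENNReal.ofReal (2 * (f x - g x)^2) ∂μ) =
      2 * ∫⁻ x, ENNReal.ofReal ((f x - g x)^2) ∂μ := by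
    rw [← lintegral_const_mul 2 (by exact ((hfm.sub hgm).pow_const 2).ennreal_ofReal :
      Measurable fun x => ENNReal.ofReal ((f x - g x)^2))]
    congr 1; ext x
    rw [ENNReal.ofReal_mul (by norm_num : (0:ℝ) ≤ 2)]
    norm_num
  rw [h2B, hc] at hmain
  have hrearr :
      2 * (∫⁻ x, ENNReal.ofReal ((f x - g x)^2) ∂μ) +
        (∫⁻ x, ENNReal.ofReal (f x - g x) ∂μ) +
        (∫⁻ x, ENNReal.ofReal (-(f x * Real.log (f x / g x))) ∂μ) =
      (2 * (∫⁻ x, ENNReal.ofReal ((f x - g x)^2) ∂μ) +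
        (∫⁻ x, ENNReal.ofReal (-(f x * Real.log (f x / g x))) ∂μ)) +
        (∫⁻ x, ENNReal.ofReal (f x - g x) ∂μ) := by ring
  rw [hrearr] at hmain
  exact (ENNReal.add_le_add_iff_right hfin1.ne).1 hmain
end

section
/- Let d ≥ 1 and 0 < c₁ ≤ c₂ be constants. There exists a constant C > 0, depending only on d, c₁ and c₂ (and not on ℓ), such that for every ℓ ∈ ℕ with ℓ ≥ 1, every weight function w: V_ℓ → ℝ with c₁ ≤ w(v) ≤ c₂ for all v ∈ V_ℓ, and every function g: V_ℓ → ℝ, one has Σ_{v ∈ V_ℓ} |g(v) − ḡ_w|² ≤ C ℓ² Σ_{(v, ṽ): v, ṽ ∈ V_ℓ, v ∼ ṽ} |g(v) − g(ṽ)|², where ḡ_w := (Σ_{v ∈ V_ℓ} g(v) w(v)) / (Σ_{v ∈ V_ℓ} w(v)). -/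
open Finset

def gi (ℓ : ℕ) (hℓ : 1 ≤ ℓ) (n : ℕ) : Fin ℓ := ⟨min n (ℓ - 1), by omega⟩

lemma gi_self {ℓ : ℕ} (hℓ : 1 ≤ ℓ) (x : Fin ℓ) : gi ℓ hℓ x.val = x := by
  have := x.isLt; ext; simp [gi]; omega

lemma gi_val {ℓ : ℕ} (hℓ : 1 ≤ ℓ) {n : ℕ} (h : n ≤ ℓ - 1) : ((gi ℓ hℓ n : Fin ℓ) : ℕ) = n := by
  simp [gi]; omega

lemma oneD {ℓ : ℕ} (hℓ : 1 ≤ ℓ) (h : Fin ℓ → ℝ) (a b : Fin ℓ) :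
    (h a - h b) ^ 2 ≤ (ℓ : ℝ) * ∑ t ∈ range (ℓ - 1),
      (h (gi ℓ hℓ (t + 1)) - h (gi ℓ hℓ t)) ^ 2 := by
  set f : ℕ → ℝ := fun n => h (gi ℓ hℓ n) with hf
  have key : ∀ p q : ℕ, p ≤ q → q ≤ ℓ - 1 →
      |f q - f p| ≤ ∑ t ∈ range (ℓ - 1), |f (t + 1) - f t| := by
    intro p q hpq hq
    have htel : f q - f p = ∑ t ∈ Finset.Ico p q, (f (t + 1) - f t) := by
      rw [Finset.sum_Ico_eq_sub _ hpq, Finset.sum_range_sub, Finset.sum_range_sub]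
      ring
    rw [htel]
    calc |∑ t ∈ Finset.Ico p q, (f (t+1) - f t)|
        ≤ ∑ t ∈ Finset.Ico p q, |f (t+1) - f t| := Finset.abs_sum_le_sum_abs _ _
      _ ≤ ∑ t ∈ range (ℓ - 1), |f (t+1) - f t| := by
          apply Finset.sum_le_sum_of_subset_of_nonneg
          · intro x hx
            simp only [Finset.mem_Ico, Finset.mem_range] at *
            omega
          · intro _ _ _; exact abs_nonneg _
  have hab : |h a - h b| ≤ ∑ t ∈ range (ℓ - 1), |f (t + 1) - f t| := by
    have ha : h a = f a.val := by rw [hf]; simp [gi_self hℓ a]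
    have hb : h b = f b.val := by rw [hf]; simp [gi_self hℓ b]
    rcases le_total a.val b.val with hle | hle
    · rw [ha, hb, abs_sub_comm]
      exact key _ _ hle (by have := b.isLt; omega)
    · rw [ha, hb]
      exact key _ _ hle (by have := a.isLt; omega)
  have h1 : (h a - h b) ^ 2 ≤ (∑ t ∈ range (ℓ - 1), |f (t + 1) - f t|) ^ 2 := by
    rw [← sq_abs]
    exact pow_le_pow_left₀ (abs_nonneg _) hab 2
  have h2 : (∑ t ∈ range (ℓ - 1), |f (t + 1) - f t|) ^ 2
      ≤ ((ℓ - 1 : ℕ) : ℝ) * ∑ t ∈ range (ℓ - 1), (f (t + 1) - f t) ^ 2 := by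
    have := sq_sum_le_card_mul_sum_sq (s := range (ℓ - 1))
      (f := fun t => |f (t + 1) - f t|)
    simpa [sq_abs] using this
  have h3 : ((ℓ - 1 : ℕ) : ℝ) * ∑ t ∈ range (ℓ - 1), (f (t + 1) - f t) ^ 2
      ≤ (ℓ : ℝ) * ∑ t ∈ range (ℓ - 1), (f (t + 1) - f t) ^ 2 := by
    apply mul_le_mul_of_nonneg_right _ (by positivity)
    exact_mod_cast Nat.sub_le ℓ 1
  calc (h a - h b) ^ 2 ≤ _ := h1
    _ ≤ _ := h2
    _ ≤ _ := h3

def mid (d ℓ : ℕ) (v u : Fin d → Fin ℓ) (j : Fin d) : Fin d → Fin ℓ :=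
  fun i => if (i : ℕ) < (j : ℕ) then u i else v i

lemma pathBound {d ℓ : ℕ} (hd : 1 ≤ d) (hℓ : 1 ≤ ℓ) (g : (Fin d → Fin ℓ) → ℝ)
    (v u : Fin d → Fin ℓ) :
    (g v - g u) ^ 2 ≤ (d : ℝ) * ℓ *
      ∑ j : Fin d, ∑ t ∈ range (ℓ - 1),
        (g (Function.update (mid d ℓ v u j) j (gi ℓ hℓ (t + 1))) -
         g (Function.update (mid d ℓ v u j) j (gi ℓ hℓ t))) ^ 2 := by
  set M : ℕ → (Fin d → Fin ℓ) := fun k i => if (i : ℕ) < k then u i else v i with hM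
  have hM0 : M 0 = v := by funext i; simp [hM]
  have hMd : M d = u := by funext i; simp [hM, i.isLt]
  have htel : g v - g u = ∑ k ∈ range d, (g (M k) - g (M (k + 1))) := by
    rw [Finset.sum_range_sub' (fun k => g (M k)), hM0, hMd]
  set Φ : Fin d → ℝ := fun j => ∑ t ∈ range (ℓ - 1),
        (g (Function.update (mid d ℓ v u j) j (gi ℓ hℓ (t + 1))) -
         g (Function.update (mid d ℓ v u j) j (gi ℓ hℓ t))) ^ 2 with hΦ
  have hd0 : 0 < d := hd
  set jk : ℕ → Fin d := fun k => ⟨k % d, Nat.mod_lt _ hd0⟩ with hjk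
  have h2 : ∀ k ∈ range d, (g (M k) - g (M (k + 1))) ^ 2 ≤ (ℓ : ℝ) * Φ (jk k) := by
    intro k hk
    rw [Finset.mem_range] at hk
    have hjkv : ((jk k : Fin d) : ℕ) = k := Nat.mod_eq_of_lt hk
    have hMk : M k = Function.update (mid d ℓ v u (jk k)) (jk k) (v (jk k)) := by
      funext i
      rcases eq_or_ne i (jk k) with rfl | hij
      · rw [Function.update_self]
        simp only [hM]
        simp [hjkv, Nat.mod_eq_of_lt hk]
      · rw [Function.update_of_ne hij]
        simp only [hM, mid]
        simp [hjkv, Nat.mod_eq_of_lt hk]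
    have hMk1 : M (k + 1) = Function.update (mid d ℓ v u (jk k)) (jk k) (u (jk k)) := by
      funext i
      rcases eq_or_ne i (jk k) with rfl | hij
      · rw [Function.update_self]
        simp only [hM]
        simp [hjkv, Nat.mod_eq_of_lt hk]
      · rw [Function.update_of_ne hij]
        have hne : (i : ℕ) ≠ k := by
          intro h; exact hij (Fin.ext (by rw [h, hjkv]))
        simp only [hM, mid]
        simp only [hjkv, Nat.mod_eq_of_lt hk]
        by_cases h : (i : ℕ) < k
        · simp [h, show (i : ℕ) < k + 1 by omega]
        · simp [h, show ¬(i : ℕ) < k + 1 by omega]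
    rw [hMk, hMk1]
    exact oneD hℓ (fun c => g (Function.update (mid d ℓ v u (jk k)) (jk k) c)) _ _
  have hsq : (g v - g u) ^ 2 ≤ (d : ℝ) * ∑ k ∈ range d, (g (M k) - g (M (k + 1))) ^ 2 := by
    rw [htel]
    have := sq_sum_le_card_mul_sum_sq (s := range d) (f := fun k => g (M k) - g (M (k + 1)))
    simpa using this
  have hsum : ∑ k ∈ range d, Φ (jk k) = ∑ j : Fin d, Φ j := by
    rw [← Fin.sum_univ_eq_sum_range (fun k => Φ (jk k)) d]
    apply Finset.sum_congr rfl
    intro i _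
    congr 1
    ext
    exact Nat.mod_eq_of_lt i.isLt
  calc (g v - g u) ^ 2 ≤ (d : ℝ) * ∑ k ∈ range d, (g (M k) - g (M (k + 1))) ^ 2 := hsq
    _ ≤ (d : ℝ) * ∑ k ∈ range d, (ℓ : ℝ) * Φ (jk k) := by
        apply mul_le_mul_of_nonneg_left (Finset.sum_le_sum h2) (by positivity)
    _ = (d : ℝ) * ℓ * ∑ j : Fin d, Φ j := by
        rw [← Finset.mul_sum, ← mul_assoc, hsum]

lemma countD {d ℓ : ℕ} (j : Fin d) (F : (Fin d → Fin ℓ) → ℝ) :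
    ∑ v : Fin d → Fin ℓ, ∑ u : Fin d → Fin ℓ, F (mid d ℓ v u j)
      = (ℓ : ℝ) ^ d * ∑ y : Fin d → Fin ℓ, F y := by
  classical
  set φ : ((Fin d → Fin ℓ) × (Fin d → Fin ℓ)) → ((Fin d → Fin ℓ) × (Fin d → Fin ℓ)) :=
    fun p => (mid d ℓ p.1 p.2 j, fun i => if (i : ℕ) < (j : ℕ) then p.1 i else p.2 i) with hφ
  set ψ : ((Fin d → Fin ℓ) × (Fin d → Fin ℓ)) → ((Fin d → Fin ℓ) × (Fin d → Fin ℓ)) :=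
    fun q => (fun i => if (i : ℕ) < (j : ℕ) then q.2 i else q.1 i,
              fun i => if (i : ℕ) < (j : ℕ) then q.1 i else q.2 i) with hψ
  have hbij : Function.Bijective φ := by
    apply Function.bijective_iff_has_inverse.mpr
    refine ⟨ψ, ?_, ?_⟩
    · rintro ⟨v, u⟩
      simp only [hφ, hψ, mid, Prod.mk.injEq]
      constructor <;> funext i <;> by_cases h : (i : ℕ) < (j : ℕ) <;> simp [mid, h]
    · rintro ⟨y, s⟩
      simp only [hφ, hψ, mid, Prod.mk.injEq]
      constructor <;> funext i <;> by_cases h : (i : ℕ) < (j : ℕ) <;> simp [mid, h]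
  have key : ∑ p : (Fin d → Fin ℓ) × (Fin d → Fin ℓ), F (mid d ℓ p.1 p.2 j)
      = ∑ q : (Fin d → Fin ℓ) × (Fin d → Fin ℓ), F q.1 :=
    Fintype.sum_bijective φ hbij _ _ (fun p => rfl)
  calc ∑ v : Fin d → Fin ℓ, ∑ u : Fin d → Fin ℓ, F (mid d ℓ v u j)
      = ∑ p : (Fin d → Fin ℓ) × (Fin d → Fin ℓ), F (mid d ℓ p.1 p.2 j) :=
        (Fintype.sum_prod_type (f := fun p : (Fin d → Fin ℓ) × (Fin d → Fin ℓ) => F (mid d ℓ p.1 p.2 j))).symm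
    _ = ∑ q : (Fin d → Fin ℓ) × (Fin d → Fin ℓ), F q.1 := key
    _ = (ℓ : ℝ) ^ d * ∑ y : Fin d → Fin ℓ, F y := by
        rw [Fintype.sum_prod_type]
        simp only [Finset.sum_const, card_univ, nsmul_eq_mul]
        rw [← Finset.mul_sum]
        simp [Fintype.card_fun]

lemma countE1 {d ℓ : ℕ} (j : Fin d) (c : Fin ℓ) (H : (Fin d → Fin ℓ) → ℝ)
    (hH : ∀ y a, H (Function.update y j a) = H y) :
    ∑ y : Fin d → Fin ℓ, H y
      = (ℓ : ℝ) * ∑ y : Fin d → Fin ℓ, (if y j = c then H y else 0) := by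
  classical
  set σ : ((Fin d → Fin ℓ) × Fin ℓ) → ((Fin d → Fin ℓ) × Fin ℓ) :=
    fun q => (Function.update q.1 j q.2, q.1 j) with hσ
  have hbij : Function.Bijective σ := by
    apply Function.bijective_iff_has_inverse.mpr
    refine ⟨σ, ?_, ?_⟩ <;>
    · rintro ⟨z, b⟩
      simp [hσ, Function.update_idem]
  have key : ∑ q : (Fin d → Fin ℓ) × Fin ℓ,
      (if (σ q).1 j = c then H ((σ q).1) else 0)
      = ∑ q : (Fin d → Fin ℓ) × Fin ℓ, (if q.1 j = c then H q.1 else 0) :=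
    Fintype.sum_bijective σ hbij _ _ (fun q => rfl)
  have lhs_eq : ∑ q : (Fin d → Fin ℓ) × Fin ℓ,
      (if (σ q).1 j = c then H ((σ q).1) else 0) = ∑ z : Fin d → Fin ℓ, H z := by
    rw [Fintype.sum_prod_type]
    apply Finset.sum_congr rfl
    intro z _
    have hb : ∀ b : Fin ℓ,
        (if (σ (z, b)).1 j = c then H ((σ (z, b)).1) else 0) = (if b = c then H z else 0) := by
      intro b
      simp only [hσ]
      rw [Function.update_self, hH]
    simp only [hb]
    simp
  have rhs_eq : ∑ q : (Fin d → Fin ℓ) × Fin ℓ, (if q.1 j = c then H q.1 else 0)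
      = (ℓ : ℝ) * ∑ y : Fin d → Fin ℓ, (if y j = c then H y else 0) := by
    rw [Fintype.sum_prod_type]
    simp [Finset.sum_const, card_univ, Finset.mul_sum]
  rw [← lhs_eq, key, rhs_eq]

lemma countE2 {d ℓ : ℕ} (hℓ : 1 ≤ ℓ) (g : (Fin d → Fin ℓ) → ℝ) :
    ∑ j : Fin d, ∑ t ∈ range (ℓ - 1), ∑ y : Fin d → Fin ℓ,
        (if y j = gi ℓ hℓ t then (g (Function.update y j (gi ℓ hℓ (t + 1))) - g y) ^ 2 else 0)
      ≤ ∑ v : Fin d → Fin ℓ, ∑ v' : Fin d → Fin ℓ,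
          (if (∑ i, (((v i : ℕ) : ℤ) - ((v' i : ℕ) : ℤ)) ^ 2) ≤ 1
            then (g v - g v') ^ 2 else 0) := by
  classical
  set A : Fin d × ℕ × (Fin d → Fin ℓ) → ℝ := fun p =>
    if p.2.2 p.1 = gi ℓ hℓ p.2.1
      then (g (Function.update p.2.2 p.1 (gi ℓ hℓ (p.2.1 + 1))) - g p.2.2) ^ 2 else 0 with hA
  set P : Finset (Fin d × ℕ × (Fin d → Fin ℓ)) := univ ×ˢ (range (ℓ - 1) ×ˢ univ) with hP
  have hLHS : ∑ j : Fin d, ∑ t ∈ range (ℓ - 1), ∑ y : Fin d → Fin ℓ,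
      (if y j = gi ℓ hℓ t then (g (Function.update y j (gi ℓ hℓ (t + 1))) - g y) ^ 2 else 0)
      = ∑ p ∈ P, A p := by
    rw [hP, Finset.sum_product]
    apply Finset.sum_congr rfl
    intro j _
    rw [Finset.sum_product]
  set cond : Fin d × ℕ × (Fin d → Fin ℓ) → Prop := fun p => p.2.2 p.1 = gi ℓ hℓ p.2.1 with hcond
  set s : Finset (Fin d × ℕ × (Fin d → Fin ℓ)) := P.filter cond with hs
  have hfilter : ∑ p ∈ P, A p
      = ∑ p ∈ s, (g (Function.update p.2.2 p.1 (gi ℓ hℓ (p.2.1 + 1))) - g p.2.2) ^ 2 := by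
    rw [hs, Finset.sum_filter]
  set φ : Fin d × ℕ × (Fin d → Fin ℓ) → (Fin d → Fin ℓ) × (Fin d → Fin ℓ) := fun p =>
    (Function.update p.2.2 p.1 (gi ℓ hℓ (p.2.1 + 1)), p.2.2) with hφ
  have hmem : ∀ p ∈ s, p.2.1 < ℓ - 1 ∧ p.2.2 p.1 = gi ℓ hℓ p.2.1 := by
    rintro ⟨j, t, y⟩ hp
    rw [hs, Finset.mem_filter] at hp
    obtain ⟨hpP, hc⟩ := hp
    rw [hP, Finset.mem_product] at hpP
    obtain ⟨-, hq⟩ := hpP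
    rw [Finset.mem_product, Finset.mem_range] at hq
    exact ⟨hq.1, hc⟩
  have hinj : ∀ p ∈ s, ∀ p' ∈ s, φ p = φ p' → p = p' := by
    rintro ⟨j, t, y⟩ hp ⟨j', t', y'⟩ hp' heq
    obtain ⟨ht, hc⟩ := hmem _ hp
    obtain ⟨ht', hc'⟩ := hmem _ hp'
    dsimp only at ht hc ht' hc'
    simp only [hφ, Prod.mk.injEq] at heq
    obtain ⟨h1, h2⟩ := heq
    subst h2
    rcases eq_or_ne j j' with rfl | hjj
    · have := congrFun h1 j
      rw [Function.update_self, Function.update_self] at this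
      have hval : t + 1 = t' + 1 := by
        have h1v := congrArg Fin.val this
        rwa [gi_val hℓ (by omega), gi_val hℓ (by omega)] at h1v
      simp [Nat.succ_injective hval]
    · exfalso
      have := congrFun h1 j
      rw [Function.update_self, Function.update_of_ne hjj] at this
      rw [hc] at this
      have h1v := congrArg Fin.val this
      rw [gi_val hℓ (by omega), gi_val hℓ (by omega)] at h1v
      omega
  have himage : ∑ p ∈ s, (g (Function.update p.2.2 p.1 (gi ℓ hℓ (p.2.1 + 1))) - g p.2.2) ^ 2
      = ∑ q ∈ s.image φ, (g q.1 - g q.2) ^ 2 := by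
    rw [Finset.sum_image hinj]
  set adj : (Fin d → Fin ℓ) × (Fin d → Fin ℓ) → Prop := fun q =>
    (∑ i, (((q.1 i : ℕ) : ℤ) - ((q.2 i : ℕ) : ℤ)) ^ 2) ≤ 1 with hadj
  have hRHS : ∑ v : Fin d → Fin ℓ, ∑ v' : Fin d → Fin ℓ,
      (if (∑ i, (((v i : ℕ) : ℤ) - ((v' i : ℕ) : ℤ)) ^ 2) ≤ 1 then (g v - g v') ^ 2 else 0)
      = ∑ q ∈ (univ ×ˢ univ).filter adj, (g q.1 - g q.2) ^ 2 := by
    rw [Finset.sum_filter, Finset.sum_product]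
  have hsub : s.image φ ⊆ (univ ×ˢ univ).filter adj := by
    intro q hq
    rw [Finset.mem_image] at hq
    obtain ⟨p, hp, rfl⟩ := hq
    obtain ⟨j, t, y⟩ := p
    obtain ⟨ht, hc⟩ := hmem _ hp
    dsimp only at ht hc
    rw [Finset.mem_filter]
    refine ⟨by simp, ?_⟩
    simp only [hadj, hφ]
    have : ∀ i : Fin d, ((((Function.update y j (gi ℓ hℓ (t + 1)) : Fin d → Fin ℓ) i : ℕ) : ℤ)
        - ((y i : ℕ) : ℤ)) ^ 2 = if i = j then 1 else 0 := by
      intro i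
      rcases eq_or_ne i j with rfl | hij
      · rw [Function.update_self, if_pos rfl]
        have h1 : ((gi ℓ hℓ (t + 1) : Fin ℓ) : ℕ) = t + 1 := gi_val hℓ (by omega)
        have h2 : ((y i : Fin ℓ) : ℕ) = t := by rw [hc]; exact gi_val hℓ (by omega)
        rw [h1, h2]
        push_cast
        ring
      · rw [Function.update_of_ne hij, if_neg hij]
        ring
    rw [Finset.sum_congr rfl (fun i _ => this i)]
    simp
  calc ∑ j : Fin d, ∑ t ∈ range (ℓ - 1), ∑ y : Fin d → Fin ℓ,
        (if y j = gi ℓ hℓ t then (g (Function.update y j (gi ℓ hℓ (t + 1))) - g y) ^ 2 else 0)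
      = ∑ q ∈ s.image φ, (g q.1 - g q.2) ^ 2 := by rw [hLHS, hfilter, himage]
    _ ≤ ∑ q ∈ (univ ×ˢ univ).filter adj, (g q.1 - g q.2) ^ 2 :=
        Finset.sum_le_sum_of_subset_of_nonneg hsub (fun _ _ _ => sq_nonneg _)
    _ = _ := hRHS.symm

lemma meanBound {d ℓ : ℕ} (hℓ : 1 ≤ ℓ) {c₁ c₂ : ℝ} (hc₁ : 0 < c₁) (hcc : c₁ ≤ c₂)
    (w g : (Fin d → Fin ℓ) → ℝ) (hw : ∀ v, c₁ ≤ w v ∧ w v ≤ c₂) :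
    ∑ v : Fin d → Fin ℓ,
        (g v - (∑ v' : Fin d → Fin ℓ, g v' * w v') / ∑ v' : Fin d → Fin ℓ, w v') ^ 2
      ≤ c₂ ^ 2 / c₁ ^ 2 / (ℓ : ℝ) ^ d *
        ∑ v : Fin d → Fin ℓ, ∑ u : Fin d → Fin ℓ, (g v - g u) ^ 2 := by
  classical
  set N : ℝ := (ℓ : ℝ) ^ d with hN
  have hcard : (Fintype.card (Fin d → Fin ℓ) : ℝ) = N := by
    simp [Fintype.card_fun, hN]
  have hN0 : 0 < N := by positivity
  set W : ℝ := ∑ v' : Fin d → Fin ℓ, w v' with hW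
  have hWlow : c₁ * N ≤ W := by
    rw [hW]
    calc c₁ * N = ∑ _v : Fin d → Fin ℓ, c₁ := by
          rw [Finset.sum_const, card_univ, nsmul_eq_mul, hcard]; ring
      _ ≤ ∑ v' : Fin d → Fin ℓ, w v' := Finset.sum_le_sum (fun v _ => (hw v).1)
  have hWpos : 0 < W := lt_of_lt_of_le (by positivity) hWlow
  have key : ∀ v : Fin d → Fin ℓ,
      (g v - (∑ v' : Fin d → Fin ℓ, g v' * w v') / W) ^ 2
      ≤ c₂ ^ 2 / c₁ ^ 2 / N * ∑ u : Fin d → Fin ℓ, (g v - g u) ^ 2 := by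
    intro v
    have hnum : g v - (∑ v' : Fin d → Fin ℓ, g v' * w v') / W
        = (∑ u : Fin d → Fin ℓ, (g v - g u) * w u) / W := by
      rw [eq_div_iff (ne_of_gt hWpos)]
      rw [sub_mul, hW, Finset.mul_sum]
      rw [show ∑ u : Fin d → Fin ℓ, (g v - g u) * w u
          = ∑ u : Fin d → Fin ℓ, (g v * w u - g u * w u) by
        apply Finset.sum_congr rfl; intro u _; ring]
      rw [Finset.sum_sub_distrib]
      rw [div_mul_cancel₀ _ (ne_of_gt hWpos)]
    have hCS : (∑ u : Fin d → Fin ℓ, (g v - g u) * w u) ^ 2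
        ≤ (∑ u : Fin d → Fin ℓ, (g v - g u) ^ 2) * ∑ u : Fin d → Fin ℓ, (w u) ^ 2 :=
      Finset.sum_mul_sq_le_sq_mul_sq univ _ _
    have hw2 : ∑ u : Fin d → Fin ℓ, (w u) ^ 2 ≤ N * c₂ ^ 2 := by
      calc ∑ u : Fin d → Fin ℓ, (w u) ^ 2 ≤ ∑ _u : Fin d → Fin ℓ, c₂ ^ 2 :=
            Finset.sum_le_sum (fun u _ => by
              have := hw u
              have h0 : 0 ≤ w u := le_of_lt (lt_of_lt_of_le hc₁ this.1)
              exact pow_le_pow_left₀ h0 this.2 2)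
        _ = N * c₂ ^ 2 := by rw [Finset.sum_const, card_univ, nsmul_eq_mul, hcard]
    have hnum2 : (∑ u : Fin d → Fin ℓ, (g v - g u) * w u) ^ 2
        ≤ (∑ u : Fin d → Fin ℓ, (g v - g u) ^ 2) * (N * c₂ ^ 2) :=
      le_trans hCS (mul_le_mul_of_nonneg_left hw2 (by positivity))
    rw [hnum, div_pow]
    have hWsq : (c₁ * N) ^ 2 ≤ W ^ 2 := by
      apply pow_le_pow_left₀ (by positivity) hWlow
    calc (∑ u : Fin d → Fin ℓ, (g v - g u) * w u) ^ 2 / W ^ 2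
        ≤ ((∑ u : Fin d → Fin ℓ, (g v - g u) ^ 2) * (N * c₂ ^ 2)) / (c₁ * N) ^ 2 := by
          apply div_le_div₀ (by positivity) hnum2 (by positivity) hWsq
      _ = c₂ ^ 2 / c₁ ^ 2 / N * ∑ u : Fin d → Fin ℓ, (g v - g u) ^ 2 := by
          field_simp
  calc ∑ v : Fin d → Fin ℓ,
        (g v - (∑ v' : Fin d → Fin ℓ, g v' * w v') / W) ^ 2
      ≤ ∑ v : Fin d → Fin ℓ,
        (c₂ ^ 2 / c₁ ^ 2 / N * ∑ u : Fin d → Fin ℓ, (g v - g u) ^ 2) :=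
        Finset.sum_le_sum (fun v _ => key v)
    _ = c₂ ^ 2 / c₁ ^ 2 / N *
        ∑ v : Fin d → Fin ℓ, ∑ u : Fin d → Fin ℓ, (g v - g u) ^ 2 := by
        rw [Finset.mul_sum]

/-- Poincaré inequality for a weighted grid graph.  For the grid
`V_ℓ = {0,…,ℓ−1}^d` with adjacency `v ∼ ṽ ↔ |v − ṽ| ≤ 1` (Euclidean norm, i.e.
`∑ i (vᵢ − ṽᵢ)² ≤ 1`), and any weight `w` with `c₁ ≤ w ≤ c₂`, one has
`∑_v |g(v) − ḡ_w|² ≤ C ℓ² ∑_{v ∼ ṽ} |g(v) − g(ṽ)|²` where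
`ḡ_w = (∑ g(v) w(v)) / (∑ w(v))`, with `C` depending only on `d, c₁, c₂`. -/
theorem stmt8 (d : ℕ) (hd : 1 ≤ d) (c₁ c₂ : ℝ) (hc₁ : 0 < c₁) (hcc : c₁ ≤ c₂) :
    ∃ C : ℝ, 0 < C ∧
      ∀ (ℓ : ℕ), 1 ≤ ℓ →
      ∀ (w g : (Fin d → Fin ℓ) → ℝ),
      (∀ v, c₁ ≤ w v ∧ w v ≤ c₂) →
      (∑ v : Fin d → Fin ℓ,
          (g v - (∑ v' : Fin d → Fin ℓ, g v' * w v') / ∑ v' : Fin d → Fin ℓ, w v') ^ 2) ≤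
        C * (ℓ : ℝ) ^ 2 *
          ∑ v : Fin d → Fin ℓ, ∑ v' : Fin d → Fin ℓ,
            (if (∑ i, (((v i : ℕ) : ℤ) - ((v' i : ℕ) : ℤ)) ^ 2) ≤ 1
              then (g v - g v') ^ 2 else 0) := by
  classical
  have hd0 : (0 : ℝ) < (d : ℝ) := by exact_mod_cast hd
  refine ⟨(d : ℝ) * c₂ ^ 2 / c₁ ^ 2,
    div_pos (mul_pos hd0 (pow_pos (lt_of_lt_of_le hc₁ hcc) 2)) (pow_pos hc₁ 2), ?_⟩
  intro ℓ hℓ w g hw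
  set N : ℝ := (ℓ : ℝ) ^ d with hN
  have hN0 : 0 < N := by positivity
  -- notation for the interior quantities
  set Δ : (Fin d → Fin ℓ) → (Fin d → Fin ℓ) → Fin d → ℕ → ℝ := fun v u j t =>
    (g (Function.update (mid d ℓ v u j) j (gi ℓ hℓ (t + 1))) -
     g (Function.update (mid d ℓ v u j) j (gi ℓ hℓ t))) ^ 2 with hΔ
  set H : Fin d → ℕ → (Fin d → Fin ℓ) → ℝ := fun j t y =>
    (g (Function.update y j (gi ℓ hℓ (t + 1))) - g (Function.update y j (gi ℓ hℓ t))) ^ 2 with hH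
  set U : ℝ := ∑ j : Fin d, ∑ t ∈ range (ℓ - 1), ∑ y : Fin d → Fin ℓ,
      (if y j = gi ℓ hℓ t then (g (Function.update y j (gi ℓ hℓ (t + 1))) - g y) ^ 2 else 0)
    with hU
  set E : ℝ := ∑ v : Fin d → Fin ℓ, ∑ v' : Fin d → Fin ℓ,
      (if (∑ i, (((v i : ℕ) : ℤ) - ((v' i : ℕ) : ℤ)) ^ 2) ≤ 1
        then (g v - g v') ^ 2 else 0) with hE
  set S2 : ℝ := ∑ v : Fin d → Fin ℓ, ∑ u : Fin d → Fin ℓ, (g v - g u) ^ 2 with hS2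
  -- step 1
  have h1 : ∑ v : Fin d → Fin ℓ,
      (g v - (∑ v' : Fin d → Fin ℓ, g v' * w v') / ∑ v' : Fin d → Fin ℓ, w v') ^ 2
      ≤ c₂ ^ 2 / c₁ ^ 2 / N * S2 := meanBound hℓ hc₁ hcc w g hw
  -- step 2 : S2 ≤ d ℓ T' with T' the quadruple sum
  have h2 : S2 ≤ (d : ℝ) * ℓ *
      ∑ v : Fin d → Fin ℓ, ∑ u : Fin d → Fin ℓ, ∑ j : Fin d, ∑ t ∈ range (ℓ - 1), Δ v u j t := by
    rw [hS2, Finset.mul_sum]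
    apply Finset.sum_le_sum
    intro v _
    rw [Finset.mul_sum]
    apply Finset.sum_le_sum
    intro u _
    exact pathBound hd hℓ g v u
  -- step 3 : exchange sums
  have h3 : ∑ v : Fin d → Fin ℓ, ∑ u : Fin d → Fin ℓ, ∑ j : Fin d, ∑ t ∈ range (ℓ - 1), Δ v u j t
      = ∑ j : Fin d, ∑ t ∈ range (ℓ - 1), ∑ v : Fin d → Fin ℓ, ∑ u : Fin d → Fin ℓ, Δ v u j t := by
    calc ∑ v : Fin d → Fin ℓ, ∑ u : Fin d → Fin ℓ, ∑ j : Fin d, ∑ t ∈ range (ℓ - 1), Δ v u j t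
        = ∑ v : Fin d → Fin ℓ, ∑ j : Fin d, ∑ u : Fin d → Fin ℓ, ∑ t ∈ range (ℓ - 1), Δ v u j t :=
          Finset.sum_congr rfl (fun v _ => Finset.sum_comm)
      _ = ∑ j : Fin d, ∑ v : Fin d → Fin ℓ, ∑ u : Fin d → Fin ℓ, ∑ t ∈ range (ℓ - 1), Δ v u j t :=
          Finset.sum_comm
      _ = ∑ j : Fin d, ∑ v : Fin d → Fin ℓ, ∑ t ∈ range (ℓ - 1), ∑ u : Fin d → Fin ℓ, Δ v u j t :=
          Finset.sum_congr rfl (fun j _ => Finset.sum_congr rfl (fun v _ => Finset.sum_comm))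
      _ = ∑ j : Fin d, ∑ t ∈ range (ℓ - 1), ∑ v : Fin d → Fin ℓ, ∑ u : Fin d → Fin ℓ, Δ v u j t :=
          Finset.sum_congr rfl (fun j _ => Finset.sum_comm)
  -- step 4 : per (j,t) congestion identity
  have h4 : ∑ j : Fin d, ∑ t ∈ range (ℓ - 1), ∑ v : Fin d → Fin ℓ, ∑ u : Fin d → Fin ℓ, Δ v u j t
      = N * ∑ j : Fin d, ∑ t ∈ range (ℓ - 1), ∑ y : Fin d → Fin ℓ, H j t y := by
    rw [Finset.mul_sum]
    apply Finset.sum_congr rfl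
    intro j _
    rw [Finset.mul_sum]
    apply Finset.sum_congr rfl
    intro t _
    exact countD j (H j t)
  -- step 5 : lines to indicator form
  have h5 : ∑ j : Fin d, ∑ t ∈ range (ℓ - 1), ∑ y : Fin d → Fin ℓ, H j t y = (ℓ : ℝ) * U := by
    rw [hU, Finset.mul_sum]
    apply Finset.sum_congr rfl
    intro j _
    rw [Finset.mul_sum]
    apply Finset.sum_congr rfl
    intro t _
    have hinv : ∀ (y : Fin d → Fin ℓ) (a : Fin ℓ),
        H j t (Function.update y j a) = H j t y := by
      intro y a
      simp only [hH, Function.update_idem]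
    rw [countE1 j (gi ℓ hℓ t) (H j t) hinv]
    congr 1
    apply Finset.sum_congr rfl
    intro y _
    split_ifs with h
    · simp only [hH]
      rw [show Function.update y j (gi ℓ hℓ t) = y from by rw [← h]; exact Function.update_eq_self j y]
    · rfl
  -- step 6
  have h6 : U ≤ E := countE2 hℓ g
  have hE0 : 0 ≤ E := by
    rw [hE]
    apply Finset.sum_nonneg; intro v _
    apply Finset.sum_nonneg; intro v' _
    split_ifs
    · exact sq_nonneg _
    · exact le_refl 0
  calc ∑ v : Fin d → Fin ℓ,
        (g v - (∑ v' : Fin d → Fin ℓ, g v' * w v') / ∑ v' : Fin d → Fin ℓ, w v') ^ 2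
      ≤ c₂ ^ 2 / c₁ ^ 2 / N * S2 := h1
    _ ≤ c₂ ^ 2 / c₁ ^ 2 / N * ((d : ℝ) * ℓ * (N * ((ℓ : ℝ) * U))) := by
        apply mul_le_mul_of_nonneg_left _ (by positivity)
        calc S2 ≤ (d : ℝ) * ℓ *
              ∑ v : Fin d → Fin ℓ, ∑ u : Fin d → Fin ℓ, ∑ j : Fin d, ∑ t ∈ range (ℓ - 1), Δ v u j t := h2
          _ = (d : ℝ) * ℓ * (N * ((ℓ : ℝ) * U)) := by rw [h3, h4, h5]
    _ = (d : ℝ) * c₂ ^ 2 / c₁ ^ 2 * (ℓ : ℝ) ^ 2 * U := by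
        field_simp
    _ ≤ (d : ℝ) * c₂ ^ 2 / c₁ ^ 2 * (ℓ : ℝ) ^ 2 * E := by
        apply mul_le_mul_of_nonneg_left h6 (by positivity)
end

section
/- Let d ≥ 1. There exists a constant c ∈ (0,1) depending only on d such that for every ℓ ∈ ℕ with ℓ ≥ 1 and every nonempty subset S ⊆ V_ℓ with |S| ≤ ℓ^d / 2, the number of ordered pairs (v, ṽ) with v ∈ S, ṽ ∈ V_ℓ \ S, and |v − ṽ| = 1 is at least c·|S|/ℓ. -/
open Finset

private lemma exists_step (h : ℕ → Prop) [DecidablePred h] {a b : ℕ} (hab : a ≤ b)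
    (ha : h a) (hb : ¬ h b) : ∃ k, a ≤ k ∧ k < b ∧ h k ∧ ¬ h (k + 1) := by
  have hks : h (Nat.findGreatest h b) := Nat.findGreatest_spec hab ha
  have hkb : Nat.findGreatest h b < b :=
    lt_of_le_of_ne (Nat.findGreatest_le b) fun he => hb (he ▸ hks)
  exact ⟨Nat.findGreatest h b, Nat.le_findGreatest hab ha, hkb, hks,
    Nat.findGreatest_is_greatest (Nat.lt_succ_self _) hkb⟩

private lemma exists_boundary {d ℓ : ℕ} (hℓ : 0 < ℓ) (S : Finset (Fin d → Fin ℓ))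
    {v w : Fin d → Fin ℓ} (hv : v ∈ S) (hw : w ∉ S) :
    ∃ x y : Fin d → Fin ℓ, x ∈ S ∧ y ∉ S ∧ ∃ j : Fin d,
      (∀ m, m ≠ j → x m = y m) ∧ ((((x j : ℕ) : ℤ) - ((y j : ℕ) : ℤ)) ^ 2 = 1) ∧
      (∀ m, m < j → x m = w m) ∧ (∀ m, j < m → x m = v m) := by
  classical
  set q : ℕ → (Fin d → Fin ℓ) := fun i m => if (m : ℕ) < i then w m else v m with hq
  have hq0 : q 0 = v := by funext m; simp [hq]
  have hqd : q d = w := by funext m; simp [hq, m.isLt]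
  obtain ⟨i, -, hid, hqi, hqi1⟩ := exists_step (fun i => q i ∈ S) (Nat.zero_le d)
      (by simpa [hq0] using hv) (by simpa [hqd] using hw)
  set j : Fin d := ⟨i, hid⟩ with hj
  have hxj : q i j = v j := by simp [hq, hj]
  set u : ℕ → (Fin d → Fin ℓ) := fun t => Function.update (q i) j ⟨t % ℓ, Nat.mod_lt _ hℓ⟩ with hu
  have hut : ∀ t : ℕ, t < ℓ → ((u t j : ℕ)) = t := by
    intro t ht
    simp [hu, Function.update_self, Nat.mod_eq_of_lt ht]
  have hum : ∀ (t : ℕ) (m : Fin d), m ≠ j → u t m = q i m := by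
    intro t m hm
    simp [hu, Function.update_of_ne hm]
  have hlo : ∀ m : Fin d, m < j → q i m = w m := by
    intro m hm
    show (if (m : ℕ) < i then w m else v m) = w m
    rw [if_pos (Fin.lt_def.mp hm : (m : ℕ) < i)]
  have hhi : ∀ m : Fin d, j < m → q i m = v m := by
    intro m hm
    have h : i < (m : ℕ) := Fin.lt_def.mp hm
    simp [hq, Nat.not_lt.mpr (Nat.le_of_lt h)]
  have huv : u (v j) = q i := by
    funext m
    rcases eq_or_ne m j with h | hm
    · subst h
      have h1 : ((u (v j : ℕ) j : ℕ)) = (v j : ℕ) := hut _ (v j).isLt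
      rw [hxj]
      exact Fin.ext h1
    · exact hum _ m hm
  have huw : u (w j) = q (i + 1) := by
    funext m
    rcases eq_or_ne m j with h | hm
    · subst h
      have h1 : ((u (w j : ℕ) j : ℕ)) = (w j : ℕ) := hut _ (w j).isLt
      have h2 : q (i + 1) j = w j := by simp [hq, hj]
      rw [h2]; exact Fin.ext h1
    · have hne : (m : ℕ) ≠ i := fun h => hm (Fin.ext h)
      rw [hum _ m hm]
      by_cases hlt : (m : ℕ) < i
      · simp [hq, hlt, Nat.lt_succ_of_lt hlt]
      · have : ¬ ((m : ℕ) < i + 1) := by omega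
        simp [hq, hlt, this]
  rcases le_or_gt ((v j : ℕ)) ((w j : ℕ)) with hvw | hvw
  · obtain ⟨k, hak, hkb, hk, hk1⟩ := exists_step (fun t => u t ∈ S) hvw
      (show u ((v j : ℕ)) ∈ S by rw [huv]; exact hqi) (show ¬ u ((w j : ℕ)) ∈ S by rw [huw]; exact hqi1)
    have hkℓ : k < ℓ := lt_trans hkb (w j).isLt
    have hk1ℓ : k + 1 < ℓ := lt_of_le_of_lt hkb (w j).isLt
    refine ⟨u k, u (k + 1), hk, hk1, j, ?_, ?_, ?_, ?_⟩
    · intro m hm; rw [hum _ m hm, hum _ m hm]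
    · rw [hut k hkℓ, hut (k + 1) hk1ℓ]; push_cast; ring
    · intro m hm
      rw [hum _ m (ne_of_lt hm), hlo m hm]
    · intro m hm
      rw [hum _ m (ne_of_gt hm), hhi m hm]
  · obtain ⟨k, hak, hkb, hk, hk1⟩ := exists_step (fun t => u t ∉ S) (le_of_lt hvw)
      (show u ((w j : ℕ)) ∉ S by rw [huw]; exact hqi1) (show ¬ u ((v j : ℕ)) ∉ S by rw [huv]; exact fun h => h hqi)
    rw [not_not] at hk1
    have hk1ℓ : k + 1 < ℓ := lt_of_le_of_lt hkb (v j).isLt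
    have hkℓ : k < ℓ := lt_trans (Nat.lt_succ_self k) hk1ℓ
    refine ⟨u (k + 1), u k, hk1, hk, j, ?_, ?_, ?_, ?_⟩
    · intro m hm; rw [hum _ m hm, hum _ m hm]
    · rw [hut k hkℓ, hut (k + 1) hk1ℓ]; push_cast; ring
    · intro m hm
      rw [hum _ m (ne_of_lt hm), hlo m hm]
    · intro m hm
      rw [hum _ m (ne_of_gt hm), hhi m hm]

/-- isoperimetric / Cheeger-type bound on the grid.  There is `c ∈ (0,1)`
depending only on `d` such that for every `ℓ ≥ 1` and every nonempty `S ⊆ V_ℓ = {0,…,ℓ−1}^d`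
with `|S| ≤ ℓ^d / 2`, the number of ordered pairs `(v, ṽ)` with `v ∈ S`, `ṽ ∉ S` and
`|v − ṽ| = 1` (i.e. `∑ i (vᵢ − ṽᵢ)² = 1`) is at least `c·|S|/ℓ`. -/
theorem stmt9 (d : ℕ) (hd : 1 ≤ d) :
    ∃ c : ℝ, 0 < c ∧ c < 1 ∧
      ∀ (ℓ : ℕ), 1 ≤ ℓ →
      ∀ S : Finset (Fin d → Fin ℓ), S.Nonempty → (S.card : ℝ) ≤ (ℓ : ℝ) ^ d / 2 →
        c * (S.card : ℝ) / (ℓ : ℝ) ≤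
          (((S ×ˢ Sᶜ).filter
            (fun p => (∑ i, (((p.1 i : ℕ) : ℤ) - ((p.2 i : ℕ) : ℤ)) ^ 2) = 1)).card : ℝ) := by
  classical
  refine ⟨1/2, by norm_num, by norm_num, ?_⟩
  intro ℓ hℓ S hS hScard
  have hℓ0 : 0 < ℓ := hℓ
  set T := (S ×ˢ Sᶜ).filter
      (fun p => (∑ i, (((p.1 i : ℕ) : ℤ) - ((p.2 i : ℕ) : ℤ)) ^ 2) = 1) with hTdef
  -- property of a chosen boundary pair
  have hex : ∀ p : (Fin d → Fin ℓ) × (Fin d → Fin ℓ), p ∈ S ×ˢ Sᶜ →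
      ∃ q : (Fin d → Fin ℓ) × (Fin d → Fin ℓ), q.1 ∈ S ∧ q.2 ∉ S ∧ ∃ j : Fin d,
        (∀ m, m ≠ j → q.1 m = q.2 m) ∧ ((((q.1 j : ℕ) : ℤ) - ((q.2 j : ℕ) : ℤ)) ^ 2 = 1) ∧
        (∀ m, m < j → q.1 m = p.2 m) ∧ (∀ m, j < m → q.1 m = p.1 m) := by
    rintro ⟨v, w⟩ hp
    rw [mem_product] at hp
    obtain ⟨x, y, hx, hy, j, h1, h2, h3, h4⟩ :=
      exists_boundary hℓ0 S hp.1 (by simpa using hp.2)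
    exact ⟨(x, y), hx, hy, j, h1, h2, h3, h4⟩
  set f : (Fin d → Fin ℓ) × (Fin d → Fin ℓ) → (Fin d → Fin ℓ) × (Fin d → Fin ℓ) :=
    fun p => if h : p ∈ S ×ˢ Sᶜ then (hex p h).choose else p with hfdef
  have hfspec : ∀ p (h : p ∈ S ×ˢ Sᶜ), (f p).1 ∈ S ∧ (f p).2 ∉ S ∧ ∃ j : Fin d,
      (∀ m, m ≠ j → (f p).1 m = (f p).2 m) ∧
      ((((f p).1 j : ℕ) : ℤ) - (((f p).2 j : ℕ) : ℤ)) ^ 2 = 1 ∧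
      (∀ m, m < j → (f p).1 m = p.2 m) ∧ (∀ m, j < m → (f p).1 m = p.1 m) := by
    intro p h
    simp only [hfdef, dif_pos h]
    exact (hex p h).choose_spec
  have hmaps : ∀ p ∈ S ×ˢ Sᶜ, f p ∈ T := by
    intro p hp
    obtain ⟨h1, h2, j, h3, h4, -, -⟩ := hfspec p hp
    rw [hTdef, mem_filter, mem_product]
    refine ⟨⟨h1, by simpa using h2⟩, ?_⟩
    rw [Finset.sum_eq_single_of_mem j (mem_univ j)]
    · exact h4
    · intro m _ hm
      rw [h3 m hm]
      ring
  have hfiber : ∀ b ∈ T, ((S ×ˢ Sᶜ).filter (fun p => f p = b)).card ≤ ℓ ^ (d + 1) := by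
    intro b hb
    rcases ((S ×ˢ Sᶜ).filter (fun p => f p = b)).eq_empty_or_nonempty with he | ⟨p0, hp0⟩
    · simp [he]
    · rw [mem_filter] at hp0
      obtain ⟨-, -, j0, hb3, hb4, -, -⟩ := hp0.2 ▸ hfspec p0 hp0.1
      have hbne : b.1 j0 ≠ b.2 j0 := by
        intro h
        rw [h] at hb4
        simp at hb4
      -- each p in the fiber has its spec with j = j0
      have hkey : ∀ p ∈ (S ×ˢ Sᶜ).filter (fun p => f p = b),
          (∀ m, m < j0 → b.1 m = p.2 m) ∧ (∀ m, j0 < m → b.1 m = p.1 m) := by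
        intro p hp
        rw [mem_filter] at hp
        obtain ⟨-, -, j, h3, h4, h5, h6⟩ := hp.2 ▸ hfspec p hp.1
        have hjj : j = j0 := by
          by_contra hne
          exact hbne (h3 j0 (Ne.symm hne))
        subst hjj
        exact ⟨h5, h6⟩
      set g : (Fin d → Fin ℓ) × (Fin d → Fin ℓ) → (Fin d → Fin ℓ) × Fin ℓ :=
        fun p => (fun m => if m ≤ j0 then p.1 m else p.2 m, p.2 j0) with hgdef
      have hinj : Set.InjOn g ((S ×ˢ Sᶜ).filter (fun p => f p = b)) := by
        intro p hp p' hp' hgp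
        obtain ⟨hp5, hp6⟩ := hkey p hp
        obtain ⟨hp5', hp6'⟩ := hkey p' hp'
        have hg1 : ∀ m, (if m ≤ j0 then p.1 m else p.2 m) = (if m ≤ j0 then p'.1 m else p'.2 m) :=
          fun m => congrFun (congrArg Prod.fst hgp) m
        have hg2 : p.2 j0 = p'.2 j0 := congrArg Prod.snd hgp
        have e1 : p.1 = p'.1 := by
          funext m
          rcases le_or_gt m j0 with hm | hm
          · have := hg1 m
            rwa [if_pos hm, if_pos hm] at this
          · rw [← hp6 m hm, ← hp6' m hm]
        have e2 : p.2 = p'.2 := by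
          funext m
          rcases lt_trichotomy m j0 with hm | hm | hm
          · rw [← hp5 m hm, ← hp5' m hm]
          · rw [hm]; exact hg2
          · have := hg1 m
            rwa [if_neg (not_le.mpr hm), if_neg (not_le.mpr hm)] at this
        exact Prod.ext e1 e2
      calc ((S ×ˢ Sᶜ).filter (fun p => f p = b)).card
          ≤ (univ : Finset ((Fin d → Fin ℓ) × Fin ℓ)).card :=
            Finset.card_le_card_of_injOn g (fun _ _ => mem_univ _) hinj
        _ = ℓ ^ (d + 1) := by simp [pow_succ]
  have key : (S ×ˢ Sᶜ).card ≤ ℓ ^ (d + 1) * T.card :=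
    Finset.card_le_mul_card_image_of_maps_to hmaps _ hfiber
  rw [Finset.card_product] at key
  -- now real arithmetic
  have hcompl : ((Sᶜ).card : ℝ) = (ℓ : ℝ) ^ d - S.card := by
    rw [Finset.card_compl]
    have h1 : S.card ≤ Fintype.card (Fin d → Fin ℓ) := Finset.card_le_univ S
    push_cast [Nat.cast_sub h1]
    simp
  have keyR : (S.card : ℝ) * ((ℓ : ℝ) ^ d - S.card) ≤ (ℓ : ℝ) ^ d * ℓ * T.card := by
    have := key
    have h2 : ((S.card * Sᶜ.card : ℕ) : ℝ) ≤ ((ℓ ^ (d + 1) * T.card : ℕ) : ℝ) := by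
      exact_mod_cast this
    push_cast at h2
    rw [hcompl] at *
    calc (S.card : ℝ) * ((ℓ : ℝ) ^ d - S.card) ≤ (ℓ : ℝ) ^ (d + 1) * T.card := by
          rw [← hcompl]; push_cast at h2 ⊢; linarith
      _ = (ℓ : ℝ) ^ d * ℓ * T.card := by ring
  have hℓR : (0 : ℝ) < ℓ := by exact_mod_cast hℓ0
  have hpd : (0 : ℝ) < (ℓ : ℝ) ^ d := pow_pos hℓR d
  have hS0 : (0 : ℝ) ≤ S.card := Nat.cast_nonneg _
  rw [div_le_iff₀ hℓR]
  nlinarith [keyR, hScard, hpd, hS0, mul_nonneg hS0 (le_of_lt hpd)]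
end
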